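/- arXiv:1408.6070 — 6 statements merged into one kernel-verified Lean document; each statement's English description precedes it below -/
import Mathlib

section
/- Suppose P is two-sided and directionally atomless, that b⁺ ≥ (a⁺)² and b⁻ ≥ (a⁻)², and that (ρ'+a⁺, ρ'+a⁻) ≠ (0,0). Then F⁺ is coercive: for every M ∈ ℝ there exists R > 0 such that ‖K‖ ≥ R implies F⁺(K) ≥ M; i.e., F⁺(K) → +∞ as ‖K‖ → +∞ (Euclidean norm). -/
open MeasureTheory

/-- The function `F⁺` from the paper, written with expectations as Bochner integrals.
Here `K'(E[PP'] − E[P]E[P'])K = E[⟪P,K⟫²] − (E[⟪P,K⟫])²` and `E[P']K = E[⟪P,K⟫]`. -/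
noncomputable def Fplus {Ω : Type*} [MeasurableSpace Ω] (ℙ : Measure Ω) {n : ℕ}
    (P : Ω → EuclideanSpace ℝ (Fin n)) (s ρ' γp ap am bp bm : ℝ)
    (K : EuclideanSpace ℝ (Fin n)) : ℝ :=
  let pk : Ω → ℝ := fun ω => inner ℝ (P ω) K
  let A : ℝ :=
    (∫ ω, ap * (s + pk ω) * (if 0 ≤ s + pk ω then (1:ℝ) else 0) ∂ℙ) +
    (∫ ω, am * (s + pk ω) * (if s + pk ω < 0 then (1:ℝ) else 0) ∂ℙ)
  ρ' ^ 2 * ((∫ ω, (pk ω) ^ 2 ∂ℙ) - (∫ ω, pk ω ∂ℙ) ^ 2) +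
  (∫ ω, (2 * ρ' * ap + bp) * (s + pk ω) ^ 2 * (if 0 ≤ s + pk ω then (1:ℝ) else 0) ∂ℙ) +
  (∫ ω, (2 * ρ' * am + bm) * (s + pk ω) ^ 2 * (if s + pk ω < 0 then (1:ℝ) else 0) ∂ℙ) -
  A ^ 2 - 2 * ρ' * A * (s + ∫ ω, pk ω ∂ℙ) - γp * A -
  ρ' * γp * (s + ∫ ω, pk ω ∂ℙ)

set_option linter.unusedSectionVars false
set_option linter.unusedVariables false
set_option maxHeartbeats 1000000

namespace FplusAux

noncomputable def pw (α β x : ℝ) : ℝ := α * max x 0 + β * min x 0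

lemma pw_eq_ite (α β x : ℝ) : pw α β x = if 0 ≤ x then α * x else β * x := by
  unfold pw
  rcases le_or_gt 0 x with h | h
  · rw [if_pos h, max_eq_left h, min_eq_right h, mul_zero, add_zero]
  · rw [if_neg (not_le.2 h), max_eq_right h.le, min_eq_left h.le, mul_zero, zero_add]

lemma pw_continuous (α β : ℝ) : Continuous (pw α β) := by
  unfold pw; fun_prop

lemma abs_pw_le (α β x : ℝ) : |pw α β x| ≤ (|α| + |β|) * |x| := by
  rw [pw_eq_ite]
  rcases le_or_gt 0 x with h | h
  · rw [if_pos h, abs_mul]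
    have : 0 ≤ |β| * |x| := by positivity
    nlinarith [abs_nonneg α, abs_nonneg x]
  · rw [if_neg (not_le.2 h), abs_mul]
    nlinarith [abs_nonneg β, abs_nonneg x, abs_nonneg α]

lemma pw_smul (α β r x : ℝ) (hr : 0 ≤ r) : pw α β (r * x) = r * pw α β x := by
  unfold pw
  have h1 : max (r * x) 0 = r * max x 0 := by
    rcases le_or_gt 0 x with h | h
    · rw [max_eq_left h, max_eq_left (by positivity)]
    · rw [max_eq_right h.le, max_eq_right (by nlinarith), mul_zero]
  have h2 : min (r * x) 0 = r * min x 0 := by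
    rcases le_or_gt 0 x with h | h
    · rw [min_eq_right h, min_eq_right (by positivity), mul_zero]
    · rw [min_eq_left h.le, min_eq_left (by nlinarith)]
  rw [h1, h2]; ring

lemma abs_mul_mul_le {c x i B : ℝ} (hx : |x| ≤ B) (hi : |i| ≤ 1) : |c * x * i| ≤ |c| * B := by
  rw [abs_mul, abs_mul]
  have h0 := abs_nonneg c
  have h1 := abs_nonneg x
  have h2 := abs_nonneg i
  have hB : (0:ℝ) ≤ B := h1.trans hx
  have h := mul_le_mul hx hi h2 hB
  calc |c| * |x| * |i| = |c| * (|x| * |i|) := by ring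
    _ ≤ |c| * (B * 1) := mul_le_mul_of_nonneg_left (by linarith) h0
    _ = |c| * B := by ring

lemma abs_mul_sq_mul_le {c x i B : ℝ} (hx : |x| ≤ B) (hi : |i| ≤ 1) :
    |c * x ^ 2 * i| ≤ |c| * B ^ 2 := by
  rw [abs_mul, abs_mul]
  have h0 := abs_nonneg c
  have h1 := abs_nonneg x
  have h2 := abs_nonneg i
  have hB : (0:ℝ) ≤ B := h1.trans hx
  have h3 : |x ^ 2| = |x| ^ 2 := by rw [sq_abs, abs_of_nonneg (sq_nonneg x)]
  have h4 : |x| ^ 2 ≤ B ^ 2 := by nlinarith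
  calc |c| * |x ^ 2| * |i| = |c| * (|x| ^ 2 * |i|) := by rw [h3]; ring
    _ ≤ |c| * (B ^ 2 * 1) := by
        refine mul_le_mul_of_nonneg_left ?_ h0
        have := mul_le_mul h4 hi h2 (by positivity : (0:ℝ) ≤ B ^ 2)
        linarith
    _ = |c| * B ^ 2 := by ring

variable {Ω : Type*} [MeasurableSpace Ω] {ℙ : Measure Ω} [IsProbabilityMeasure ℙ]

lemma integrable_of_boundZ {Z : Ω → ℝ} (hiZ : Integrable Z ℙ)
    (hiZ2 : Integrable (fun ω => Z ω ^ 2) ℙ)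
    {f : Ω → ℝ} (hf : AEStronglyMeasurable f ℙ) (C1 C2 C3 : ℝ)
    (hb : ∀ ω, |f ω| ≤ C1 + C2 * |Z ω| + C3 * Z ω ^ 2) : Integrable f ℙ := by
  have hB : Integrable (fun ω => C1 + C2 * |Z ω| + C3 * Z ω ^ 2) ℙ :=
    ((integrable_const C1).add (hiZ.abs.const_mul C2)).add (hiZ2.const_mul C3)
  refine hB.mono hf ?_
  filter_upwards with ω
  calc ‖f ω‖ = |f ω| := rfl
    _ ≤ C1 + C2 * |Z ω| + C3 * Z ω ^ 2 := hb ω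
    _ ≤ ‖C1 + C2 * |Z ω| + C3 * Z ω ^ 2‖ := le_abs_self _

/-- Core inequality: `F⁺` (with `A` abbreviated) dominates the shifted
variance-type expression of `pw (ρ'+ap) (ρ'+am) (s + Z ·)`. -/
lemma Fplus_core (s ρ' γp ap am bp bm : ℝ) (hbp : ap ^ 2 ≤ bp) (hbm : am ^ 2 ≤ bm)
    {Z : Ω → ℝ} (mZ : Measurable Z) (hiZ : Integrable Z ℙ)
    (hiZ2 : Integrable (fun ω => Z ω ^ 2) ℙ) (A : ℝ)
    (hA : A = (∫ ω, ap * (s + Z ω) * (if 0 ≤ s + Z ω then (1:ℝ) else 0) ∂ℙ) +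
      (∫ ω, am * (s + Z ω) * (if s + Z ω < 0 then (1:ℝ) else 0) ∂ℙ)) :
    (∫ ω, (pw (ρ' + ap) (ρ' + am) (s + Z ω)) ^ 2 ∂ℙ) -
      (∫ ω, pw (ρ' + ap) (ρ' + am) (s + Z ω) ∂ℙ) ^ 2 -
      γp * (∫ ω, pw (ρ' + ap) (ρ' + am) (s + Z ω) ∂ℙ)
    ≤ ρ' ^ 2 * ((∫ ω, Z ω ^ 2 ∂ℙ) - (∫ ω, Z ω ∂ℙ) ^ 2) +
      (∫ ω, (2 * ρ' * ap + bp) * (s + Z ω) ^ 2 * (if 0 ≤ s + Z ω then (1:ℝ) else 0) ∂ℙ) +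
      (∫ ω, (2 * ρ' * am + bm) * (s + Z ω) ^ 2 * (if s + Z ω < 0 then (1:ℝ) else 0) ∂ℙ) -
      A ^ 2 - 2 * ρ' * A * (s + ∫ ω, Z ω ∂ℙ) - γp * A -
      ρ' * γp * (s + ∫ ω, Z ω ∂ℙ) := by
  classical
  have mX : Measurable (fun ω => s + Z ω) := measurable_const.add mZ
  have mind1 : Measurable (fun ω => if 0 ≤ s + Z ω then (1:ℝ) else 0) :=
    Measurable.ite (measurableSet_le measurable_const mX) measurable_const measurable_const
  have mind2 : Measurable (fun ω => if s + Z ω < 0 then (1:ℝ) else 0) :=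
    Measurable.ite (measurableSet_lt mX measurable_const) measurable_const measurable_const
  have hXb : ∀ ω, |s + Z ω| ≤ |s| + |Z ω| := fun ω => abs_add_le _ _
  have hind1 : ∀ ω, |(if 0 ≤ s + Z ω then (1:ℝ) else 0)| ≤ 1 := by
    intro ω; split_ifs <;> simp
  have hind2 : ∀ ω, |(if s + Z ω < 0 then (1:ℝ) else 0)| ≤ 1 := by
    intro ω; split_ifs <;> simp
  -- integrability
  have hi1 : Integrable (fun ω => ap * (s + Z ω) * (if 0 ≤ s + Z ω then (1:ℝ) else 0)) ℙ := by
    refine integrable_of_boundZ hiZ hiZ2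
      (((measurable_const.mul mX).mul mind1).aestronglyMeasurable)
      (|ap| * |s|) |ap| 0 fun ω => ?_
    calc |ap * (s + Z ω) * _| ≤ |ap| * (|s| + |Z ω|) := abs_mul_mul_le (hXb ω) (hind1 ω)
      _ = |ap| * |s| + |ap| * |Z ω| + 0 * Z ω ^ 2 := by ring
  have hi2 : Integrable (fun ω => am * (s + Z ω) * (if s + Z ω < 0 then (1:ℝ) else 0)) ℙ := by
    refine integrable_of_boundZ hiZ hiZ2
      (((measurable_const.mul mX).mul mind2).aestronglyMeasurable)
      (|am| * |s|) |am| 0 fun ω => ?_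
    calc |am * (s + Z ω) * _| ≤ |am| * (|s| + |Z ω|) := abs_mul_mul_le (hXb ω) (hind2 ω)
      _ = |am| * |s| + |am| * |Z ω| + 0 * Z ω ^ 2 := by ring
  have hi3 : Integrable (fun ω => (2 * ρ' * ap + bp) * (s + Z ω) ^ 2 *
      (if 0 ≤ s + Z ω then (1:ℝ) else 0)) ℙ := by
    refine integrable_of_boundZ hiZ hiZ2
      (((measurable_const.mul (mX.pow measurable_const)).mul mind1).aestronglyMeasurable)
      (|2 * ρ' * ap + bp| * |s| ^ 2) (|2 * ρ' * ap + bp| * (2 * |s|))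
      |2 * ρ' * ap + bp| fun ω => ?_
    have h := abs_mul_sq_mul_le (c := 2 * ρ' * ap + bp) (hXb ω) (hind1 ω)
    calc |(2 * ρ' * ap + bp) * (s + Z ω) ^ 2 * _| ≤ |2 * ρ' * ap + bp| * (|s| + |Z ω|) ^ 2 := h
      _ = |2 * ρ' * ap + bp| * |s| ^ 2 + |2 * ρ' * ap + bp| * (2 * |s|) * |Z ω| +
          |2 * ρ' * ap + bp| * |Z ω| ^ 2 := by ring
      _ = _ := by simp [sq_abs]
  have hi4 : Integrable (fun ω => (2 * ρ' * am + bm) * (s + Z ω) ^ 2 *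
      (if s + Z ω < 0 then (1:ℝ) else 0)) ℙ := by
    refine integrable_of_boundZ hiZ hiZ2
      (((measurable_const.mul (mX.pow measurable_const)).mul mind2).aestronglyMeasurable)
      (|2 * ρ' * am + bm| * |s| ^ 2) (|2 * ρ' * am + bm| * (2 * |s|))
      |2 * ρ' * am + bm| fun ω => ?_
    have h := abs_mul_sq_mul_le (c := 2 * ρ' * am + bm) (hXb ω) (hind2 ω)
    calc |(2 * ρ' * am + bm) * (s + Z ω) ^ 2 * _| ≤ |2 * ρ' * am + bm| * (|s| + |Z ω|) ^ 2 := h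
      _ = |2 * ρ' * am + bm| * |s| ^ 2 + |2 * ρ' * am + bm| * (2 * |s|) * |Z ω| +
          |2 * ρ' * am + bm| * |Z ω| ^ 2 := by ring
      _ = _ := by simp [sq_abs]
  have hiX : Integrable (fun ω => s + Z ω) ℙ := (integrable_const s).add hiZ
  have hiX2 : Integrable (fun ω => (s + Z ω) ^ 2) ℙ := by
    have e : (fun ω => (s + Z ω) ^ 2) = fun ω => s ^ 2 + (2 * s) * Z ω + Z ω ^ 2 := by
      funext ω; ring
    rw [e]
    exact ((integrable_const _).add (hiZ.const_mul _)).add hiZ2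
  have hiY : Integrable (fun ω => pw (ρ' + ap) (ρ' + am) (s + Z ω)) ℙ := by
    refine integrable_of_boundZ hiZ hiZ2
      (((pw_continuous _ _).measurable.comp mX).aestronglyMeasurable)
      ((|ρ' + ap| + |ρ' + am|) * |s|) (|ρ' + ap| + |ρ' + am|) 0 fun ω => ?_
    have h0 : (0:ℝ) ≤ |ρ' + ap| + |ρ' + am| := by positivity
    calc |pw (ρ' + ap) (ρ' + am) (s + Z ω)| ≤ (|ρ' + ap| + |ρ' + am|) * |s + Z ω| :=
          abs_pw_le _ _ _
      _ ≤ (|ρ' + ap| + |ρ' + am|) * (|s| + |Z ω|) :=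
          mul_le_mul_of_nonneg_left (hXb ω) h0
      _ = (|ρ' + ap| + |ρ' + am|) * |s| + (|ρ' + ap| + |ρ' + am|) * |Z ω| + 0 * Z ω ^ 2 := by
          ring
  have hiY2 : Integrable (fun ω => (pw (ρ' + ap) (ρ' + am) (s + Z ω)) ^ 2) ℙ := by
    refine integrable_of_boundZ hiZ hiZ2
      ((((pw_continuous _ _).measurable.comp mX).pow measurable_const).aestronglyMeasurable)
      ((|ρ' + ap| + |ρ' + am|) ^ 2 * |s| ^ 2)
      ((|ρ' + ap| + |ρ' + am|) ^ 2 * (2 * |s|))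
      ((|ρ' + ap| + |ρ' + am|) ^ 2) fun ω => ?_
    have h0 : (0:ℝ) ≤ |ρ' + ap| + |ρ' + am| := by positivity
    have h1 : |pw (ρ' + ap) (ρ' + am) (s + Z ω)| ≤ (|ρ' + ap| + |ρ' + am|) * (|s| + |Z ω|) :=
      (abs_pw_le _ _ _).trans (mul_le_mul_of_nonneg_left (hXb ω) h0)
    have h3 : |(pw (ρ' + ap) (ρ' + am) (s + Z ω)) ^ 2| =
        |pw (ρ' + ap) (ρ' + am) (s + Z ω)| ^ 2 := by
      rw [sq_abs, abs_of_nonneg (sq_nonneg _)]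
    have h4 : |pw (ρ' + ap) (ρ' + am) (s + Z ω)| ^ 2 ≤
        ((|ρ' + ap| + |ρ' + am|) * (|s| + |Z ω|)) ^ 2 := by
      have := abs_nonneg (pw (ρ' + ap) (ρ' + am) (s + Z ω))
      nlinarith
    calc |(pw (ρ' + ap) (ρ' + am) (s + Z ω)) ^ 2| ≤
          ((|ρ' + ap| + |ρ' + am|) * (|s| + |Z ω|)) ^ 2 := by rw [h3]; exact h4
      _ = (|ρ' + ap| + |ρ' + am|) ^ 2 * |s| ^ 2 +
          (|ρ' + ap| + |ρ' + am|) ^ 2 * (2 * |s|) * |Z ω| +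
          (|ρ' + ap| + |ρ' + am|) ^ 2 * |Z ω| ^ 2 := by ring
      _ = _ := by simp [sq_abs]
  -- integral identities
  have hXint : (∫ ω, (s + Z ω) ∂ℙ) = s + ∫ ω, Z ω ∂ℙ := by
    rw [integral_add (integrable_const s) hiZ, integral_const]
    simp [measure_univ]
  have hAeq : A = ∫ ω, pw ap am (s + Z ω) ∂ℙ := by
    rw [hA, ← integral_add hi1 hi2]
    refine integral_congr_ae (Filter.Eventually.of_forall fun ω => ?_)
    simp only [Pi.add_apply, pw_eq_ite]
    rcases le_or_gt 0 (s + Z ω) with h | h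
    · simp [h, not_lt.2 h]
    · simp [h, not_le.2 h]
  have hipwA : Integrable (fun ω => pw ap am (s + Z ω)) ℙ := by
    refine (hi1.add hi2).congr (Filter.Eventually.of_forall fun ω => ?_)
    simp only [Pi.add_apply, pw_eq_ite]
    rcases le_or_gt 0 (s + Z ω) with h | h
    · simp [h, not_lt.2 h]
    · simp [h, not_le.2 h]
  have hYint_eq : (∫ ω, pw ap am (s + Z ω) ∂ℙ) + ρ' * (s + ∫ ω, Z ω ∂ℙ) =
      ∫ ω, pw (ρ' + ap) (ρ' + am) (s + Z ω) ∂ℙ := by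
    rw [← hXint, ← integral_const_mul, ← integral_add hipwA (hiX.const_mul ρ')]
    refine integral_congr_ae (Filter.Eventually.of_forall fun ω => ?_)
    simp only [Pi.add_apply, pw_eq_ite]
    rcases le_or_gt 0 (s + Z ω) with h | h
    · simp only [if_pos h]; ring
    · simp only [if_neg (not_le.2 h)]; ring
  have hq : ∀ ω, (pw (ρ' + ap) (ρ' + am) (s + Z ω)) ^ 2 ≤
      ((2 * ρ' * ap + bp) * (s + Z ω) ^ 2 * (if 0 ≤ s + Z ω then (1:ℝ) else 0) +
       (2 * ρ' * am + bm) * (s + Z ω) ^ 2 * (if s + Z ω < 0 then (1:ℝ) else 0)) +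
      ρ' ^ 2 * (s + Z ω) ^ 2 := by
    intro ω
    rw [pw_eq_ite]
    rcases le_or_gt 0 (s + Z ω) with h | h
    · rw [if_pos h, if_pos h, if_neg (not_lt.2 h)]
      nlinarith [mul_nonneg (sub_nonneg.2 hbp) (sq_nonneg (s + Z ω))]
    · rw [if_neg (not_le.2 h), if_neg (not_le.2 h), if_pos h]
      nlinarith [mul_nonneg (sub_nonneg.2 hbm) (sq_nonneg (s + Z ω))]
  have hQ : (∫ ω, (pw (ρ' + ap) (ρ' + am) (s + Z ω)) ^ 2 ∂ℙ) ≤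
      (∫ ω, (2 * ρ' * ap + bp) * (s + Z ω) ^ 2 * (if 0 ≤ s + Z ω then (1:ℝ) else 0) ∂ℙ) +
      (∫ ω, (2 * ρ' * am + bm) * (s + Z ω) ^ 2 * (if s + Z ω < 0 then (1:ℝ) else 0) ∂ℙ) +
      ρ' ^ 2 * ∫ ω, (s + Z ω) ^ 2 ∂ℙ := by
    calc (∫ ω, (pw (ρ' + ap) (ρ' + am) (s + Z ω)) ^ 2 ∂ℙ)
        ≤ ∫ ω, ((2 * ρ' * ap + bp) * (s + Z ω) ^ 2 * (if 0 ≤ s + Z ω then (1:ℝ) else 0) +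
            (2 * ρ' * am + bm) * (s + Z ω) ^ 2 * (if s + Z ω < 0 then (1:ℝ) else 0)) +
            ρ' ^ 2 * (s + Z ω) ^ 2 ∂ℙ :=
          integral_mono hiY2 ((hi3.add hi4).add (hiX2.const_mul _)) hq
      _ = (∫ ω, (2 * ρ' * ap + bp) * (s + Z ω) ^ 2 * (if 0 ≤ s + Z ω then (1:ℝ) else 0) +
            (2 * ρ' * am + bm) * (s + Z ω) ^ 2 * (if s + Z ω < 0 then (1:ℝ) else 0) ∂ℙ) +
            ∫ ω, ρ' ^ 2 * (s + Z ω) ^ 2 ∂ℙ := integral_add (hi3.add hi4) (hiX2.const_mul _)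
      _ = ((∫ ω, (2 * ρ' * ap + bp) * (s + Z ω) ^ 2 * (if 0 ≤ s + Z ω then (1:ℝ) else 0) ∂ℙ) +
            ∫ ω, (2 * ρ' * am + bm) * (s + Z ω) ^ 2 * (if s + Z ω < 0 then (1:ℝ) else 0) ∂ℙ) +
            ∫ ω, ρ' ^ 2 * (s + Z ω) ^ 2 ∂ℙ := by rw [integral_add hi3 hi4]
      _ = (∫ ω, (2 * ρ' * ap + bp) * (s + Z ω) ^ 2 * (if 0 ≤ s + Z ω then (1:ℝ) else 0) ∂ℙ) +
            (∫ ω, (2 * ρ' * am + bm) * (s + Z ω) ^ 2 * (if s + Z ω < 0 then (1:ℝ) else 0) ∂ℙ) +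
            ρ' ^ 2 * ∫ ω, (s + Z ω) ^ 2 ∂ℙ := by rw [integral_const_mul]
  have hX2eq : (∫ ω, (s + Z ω) ^ 2 ∂ℙ) =
      s ^ 2 + 2 * s * (∫ ω, Z ω ∂ℙ) + ∫ ω, Z ω ^ 2 ∂ℙ := by
    have e : (fun ω => (s + Z ω) ^ 2) = fun ω => (s ^ 2 + (2 * s) * Z ω) + Z ω ^ 2 :=
      funext fun ω => by ring
    calc (∫ ω, (s + Z ω) ^ 2 ∂ℙ) = ∫ ω, (s ^ 2 + (2 * s) * Z ω) + Z ω ^ 2 ∂ℙ := by rw [e]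
      _ = (∫ ω, s ^ 2 + (2 * s) * Z ω ∂ℙ) + ∫ ω, Z ω ^ 2 ∂ℙ :=
          integral_add ((integrable_const _).add (hiZ.const_mul _)) hiZ2
      _ = s ^ 2 + 2 * s * (∫ ω, Z ω ∂ℙ) + ∫ ω, Z ω ^ 2 ∂ℙ := by
          rw [integral_add (integrable_const _) (hiZ.const_mul _), integral_const,
            integral_const_mul]
          simp [measure_univ]
  have e1 : (∫ ω, pw (ρ' + ap) (ρ' + am) (s + Z ω) ∂ℙ) = A + ρ' * (s + ∫ ω, Z ω ∂ℙ) := by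
    rw [hAeq]; linarith [hYint_eq]
  have key : (∫ ω, (pw (ρ' + ap) (ρ' + am) (s + Z ω)) ^ 2 ∂ℙ) ≤
      (∫ ω, (2 * ρ' * ap + bp) * (s + Z ω) ^ 2 * (if 0 ≤ s + Z ω then (1:ℝ) else 0) ∂ℙ) +
      (∫ ω, (2 * ρ' * am + bm) * (s + Z ω) ^ 2 * (if s + Z ω < 0 then (1:ℝ) else 0) ∂ℙ) +
      ρ' ^ 2 * (s ^ 2 + 2 * s * (∫ ω, Z ω ∂ℙ) + ∫ ω, Z ω ^ 2 ∂ℙ) := by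
    rw [← hX2eq]; exact hQ
  calc (∫ ω, (pw (ρ' + ap) (ρ' + am) (s + Z ω)) ^ 2 ∂ℙ) -
        (∫ ω, pw (ρ' + ap) (ρ' + am) (s + Z ω) ∂ℙ) ^ 2 -
        γp * (∫ ω, pw (ρ' + ap) (ρ' + am) (s + Z ω) ∂ℙ)
      = (∫ ω, (pw (ρ' + ap) (ρ' + am) (s + Z ω)) ^ 2 ∂ℙ) -
        (A + ρ' * (s + ∫ ω, Z ω ∂ℙ)) ^ 2 - γp * (A + ρ' * (s + ∫ ω, Z ω ∂ℙ)) := by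
        rw [e1]
    _ ≤ ((∫ ω, (2 * ρ' * ap + bp) * (s + Z ω) ^ 2 * (if 0 ≤ s + Z ω then (1:ℝ) else 0) ∂ℙ) +
        (∫ ω, (2 * ρ' * am + bm) * (s + Z ω) ^ 2 * (if s + Z ω < 0 then (1:ℝ) else 0) ∂ℙ) +
        ρ' ^ 2 * (s ^ 2 + 2 * s * (∫ ω, Z ω ∂ℙ) + ∫ ω, Z ω ^ 2 ∂ℙ)) -
        (A + ρ' * (s + ∫ ω, Z ω ∂ℙ)) ^ 2 - γp * (A + ρ' * (s + ∫ ω, Z ω ∂ℙ)) := by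
        linarith [key]
    _ = ρ' ^ 2 * ((∫ ω, Z ω ^ 2 ∂ℙ) - (∫ ω, Z ω ∂ℙ) ^ 2) +
        (∫ ω, (2 * ρ' * ap + bp) * (s + Z ω) ^ 2 * (if 0 ≤ s + Z ω then (1:ℝ) else 0) ∂ℙ) +
        (∫ ω, (2 * ρ' * am + bm) * (s + Z ω) ^ 2 * (if s + Z ω < 0 then (1:ℝ) else 0) ∂ℙ) -
        A ^ 2 - 2 * ρ' * A * (s + ∫ ω, Z ω ∂ℙ) - γp * A -
        ρ' * γp * (s + ∫ ω, Z ω ∂ℙ) := by ring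


variable {n : ℕ} {P : Ω → EuclideanSpace ℝ (Fin n)}

lemma integrable_normP (hmeas : Measurable P) (hL2 : Integrable (fun ω => ‖P ω‖ ^ 2) ℙ) :
    Integrable (fun ω => ‖P ω‖) ℙ := by
  refine ((integrable_const (1:ℝ)).add hL2).mono
    (hmeas.norm.aestronglyMeasurable) ?_
  filter_upwards with ω
  have h := norm_nonneg (P ω)
  simp only [Pi.add_apply, Real.norm_eq_abs, abs_of_nonneg h]
  rw [abs_of_nonneg (by positivity)]
  nlinarith

lemma measurable_pk (hmeas : Measurable P) (K : EuclideanSpace ℝ (Fin n)) :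
    Measurable (fun ω => (inner ℝ (P ω) K : ℝ)) :=
  ((continuous_id.inner continuous_const).measurable).comp hmeas

omit [IsProbabilityMeasure ℙ] [MeasurableSpace Ω] in
lemma abs_pk_le (K : EuclideanSpace ℝ (Fin n)) (ω : Ω) :
    |(inner ℝ (P ω) K : ℝ)| ≤ ‖K‖ * ‖P ω‖ := by
  calc |(inner ℝ (P ω) K : ℝ)| = ‖(inner ℝ (P ω) K : ℝ)‖ := rfl
    _ ≤ ‖P ω‖ * ‖K‖ := norm_inner_le_norm _ _
    _ = ‖K‖ * ‖P ω‖ := mul_comm _ _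

lemma integrable_pk (hmeas : Measurable P) (hL2 : Integrable (fun ω => ‖P ω‖ ^ 2) ℙ)
    (K : EuclideanSpace ℝ (Fin n)) :
    Integrable (fun ω => (inner ℝ (P ω) K : ℝ)) ℙ := by
  refine ((integrable_normP hmeas hL2).const_mul ‖K‖).mono
    (measurable_pk hmeas K).aestronglyMeasurable ?_
  filter_upwards with ω
  have h := abs_pk_le (P := P) K ω
  have h2 : ‖K‖ * ‖P ω‖ ≤ |‖K‖ * ‖P ω‖| := le_abs_self _
  calc ‖(inner ℝ (P ω) K : ℝ)‖ = |(inner ℝ (P ω) K : ℝ)| := rfl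
    _ ≤ ‖K‖ * ‖P ω‖ := h
    _ ≤ ‖‖K‖ * ‖P ω‖‖ := h2

lemma integrable_pk_sq (hmeas : Measurable P) (hL2 : Integrable (fun ω => ‖P ω‖ ^ 2) ℙ)
    (K : EuclideanSpace ℝ (Fin n)) :
    Integrable (fun ω => (inner ℝ (P ω) K : ℝ) ^ 2) ℙ := by
  refine (hL2.const_mul (‖K‖ ^ 2)).mono
    (((measurable_pk hmeas K).pow measurable_const).aestronglyMeasurable) ?_
  filter_upwards with ω
  have h := abs_pk_le (P := P) K ω
  have h0 := abs_nonneg (inner ℝ (P ω) K : ℝ)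
  have h1 : |(inner ℝ (P ω) K : ℝ) ^ 2| = |(inner ℝ (P ω) K : ℝ)| ^ 2 := by
    rw [sq_abs, abs_of_nonneg (sq_nonneg _)]
  calc ‖(inner ℝ (P ω) K : ℝ) ^ 2‖ = |(inner ℝ (P ω) K : ℝ)| ^ 2 := h1
    _ ≤ (‖K‖ * ‖P ω‖) ^ 2 := by nlinarith
    _ = ‖K‖ ^ 2 * ‖P ω‖ ^ 2 := by ring
    _ ≤ ‖‖K‖ ^ 2 * ‖P ω‖ ^ 2‖ := le_abs_self _

lemma Fplus_ge (hmeas : Measurable P) (hL2 : Integrable (fun ω => ‖P ω‖ ^ 2) ℙ)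
    (s ρ' γp ap am bp bm : ℝ) (hbp : ap ^ 2 ≤ bp) (hbm : am ^ 2 ≤ bm)
    (K : EuclideanSpace ℝ (Fin n)) :
    (∫ ω, (pw (ρ' + ap) (ρ' + am) (s + inner ℝ (P ω) K)) ^ 2 ∂ℙ) -
      (∫ ω, pw (ρ' + ap) (ρ' + am) (s + inner ℝ (P ω) K) ∂ℙ) ^ 2 -
      γp * (∫ ω, pw (ρ' + ap) (ρ' + am) (s + inner ℝ (P ω) K) ∂ℙ)
    ≤ Fplus ℙ P s ρ' γp ap am bp bm K := by
  have h := Fplus_core (ℙ := ℙ) s ρ' γp ap am bp bm hbp hbm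
    (measurable_pk hmeas K) (integrable_pk hmeas hL2 K) (integrable_pk_sq hmeas hL2 K)
    ((∫ ω, ap * (s + inner ℝ (P ω) K) * (if 0 ≤ s + inner ℝ (P ω) K then (1:ℝ) else 0) ∂ℙ) +
     (∫ ω, am * (s + inner ℝ (P ω) K) * (if s + inner ℝ (P ω) K < 0 then (1:ℝ) else 0) ∂ℙ)) rfl
  simpa only [Fplus] using h

/-- If the `pw`-variance vanishes then we get a contradiction with two-sidedness
and atomlessness. -/
lemma var_pos {Z : Ω → ℝ} (α β : ℝ) (hne : α ≠ 0 ∨ β ≠ 0)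
    (hpos : 0 < ℙ {ω | 0 < Z ω}) (hneg : 0 < ℙ {ω | Z ω < 0})
    (hatom : ∀ c : ℝ, ℙ {ω | Z ω = c} = 0)
    (hiY : Integrable (fun ω => pw α β (Z ω)) ℙ)
    (hiY2 : Integrable (fun ω => (pw α β (Z ω)) ^ 2) ℙ) :
    0 < (∫ ω, (pw α β (Z ω)) ^ 2 ∂ℙ) - (∫ ω, pw α β (Z ω) ∂ℙ) ^ 2 := by
  by_contra hcon
  push_neg at hcon
  set m : ℝ := ∫ ω, pw α β (Z ω) ∂ℙ with hm
  have hiV : Integrable (fun ω => (pw α β (Z ω) - m) ^ 2) ℙ := by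
    have e : (fun ω => (pw α β (Z ω) - m) ^ 2) =
        fun ω => ((pw α β (Z ω)) ^ 2 - (2 * m) * pw α β (Z ω)) + m ^ 2 :=
      funext fun ω => by ring
    rw [e]
    exact (hiY2.sub (hiY.const_mul _)).add (integrable_const _)
  have hVeq : (∫ ω, (pw α β (Z ω) - m) ^ 2 ∂ℙ) =
      (∫ ω, (pw α β (Z ω)) ^ 2 ∂ℙ) - m ^ 2 := by
    have e : (fun ω => (pw α β (Z ω) - m) ^ 2) =
        fun ω => ((pw α β (Z ω)) ^ 2 - (2 * m) * pw α β (Z ω)) + m ^ 2 :=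
      funext fun ω => by ring
    have i1 : Integrable (fun ω => (pw α β (Z ω)) ^ 2 - (2 * m) * pw α β (Z ω)) ℙ :=
      hiY2.sub (hiY.const_mul _)
    rw [e, integral_add i1 (integrable_const _),
      integral_sub hiY2 (hiY.const_mul _), integral_const_mul, integral_const]
    simp [measure_univ, ← hm]
    ring
  have hV0 : (∫ ω, (pw α β (Z ω) - m) ^ 2 ∂ℙ) = 0 := by
    have h1 : (0:ℝ) ≤ ∫ ω, (pw α β (Z ω) - m) ^ 2 ∂ℙ :=
      integral_nonneg fun ω => sq_nonneg _
    have h2 : (∫ ω, (pw α β (Z ω) - m) ^ 2 ∂ℙ) ≤ 0 := by rw [hVeq]; linarith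
    linarith
  have hae : ∀ᵐ ω ∂ℙ, pw α β (Z ω) = m := by
    have := (integral_eq_zero_iff_of_nonneg (fun ω => sq_nonneg (pw α β (Z ω) - m)) hiV).1 hV0
    filter_upwards [this] with ω hω
    have : (pw α β (Z ω) - m) ^ 2 = 0 := hω
    have := pow_eq_zero_iff (n := 2) (by norm_num) |>.1 this
    linarith [sub_eq_zero.1 this]
  have hnull : ℙ {ω | ¬ pw α β (Z ω) = m} = 0 := by
    rw [← ae_iff] at *
    exact hae
  rcases hne with hα | hβ
  · have hsub : {ω | 0 < Z ω} ⊆ {ω | ¬ pw α β (Z ω) = m} ∪ {ω | Z ω = m / α} := by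
      intro ω hω
      by_cases hmm : pw α β (Z ω) = m
      · right
        have hz : α * Z ω = m := by
          rw [← hmm, pw_eq_ite, if_pos (le_of_lt hω)]
        show Z ω = m / α
        rw [eq_div_iff hα, mul_comm]
        exact hz
      · left; exact hmm
    have hle : ℙ {ω | 0 < Z ω} ≤ 0 := by
      calc ℙ {ω | 0 < Z ω} ≤ ℙ ({ω | ¬ pw α β (Z ω) = m} ∪ {ω | Z ω = m / α}) :=
            measure_mono hsub
        _ ≤ ℙ {ω | ¬ pw α β (Z ω) = m} + ℙ {ω | Z ω = m / α} := measure_union_le _ _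
        _ = 0 := by rw [hnull, hatom (m / α), add_zero]
    exact absurd (le_antisymm hle zero_le) hpos.ne'
  · have hsub : {ω | Z ω < 0} ⊆ {ω | ¬ pw α β (Z ω) = m} ∪ {ω | Z ω = m / β} := by
      intro ω hω
      by_cases hmm : pw α β (Z ω) = m
      · right
        have hz : β * Z ω = m := by
          rw [← hmm, pw_eq_ite, if_neg (not_le.2 hω)]
        show Z ω = m / β
        rw [eq_div_iff hβ, mul_comm]
        exact hz
      · left; exact hmm
    have hle : ℙ {ω | Z ω < 0} ≤ 0 := by
      calc ℙ {ω | Z ω < 0} ≤ ℙ ({ω | ¬ pw α β (Z ω) = m} ∪ {ω | Z ω = m / β}) :=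
            measure_mono hsub
        _ ≤ ℙ {ω | ¬ pw α β (Z ω) = m} + ℙ {ω | Z ω = m / β} := measure_union_le _ _
        _ = 0 := by rw [hnull, hatom (m / β), add_zero]
    exact absurd (le_antisymm hle zero_le) hneg.ne'

/-- The rescaled variance function `G(t, L) = Var(pw α β (t + ⟪P, L⟫))`. -/
noncomputable def Gfun (ℙ : Measure Ω) (P : Ω → EuclideanSpace ℝ (Fin n)) (α β : ℝ)
    (p : ℝ × EuclideanSpace ℝ (Fin n)) : ℝ :=
  (∫ ω, (pw α β (p.1 + inner ℝ (P ω) p.2)) ^ 2 ∂ℙ) -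
    (∫ ω, pw α β (p.1 + inner ℝ (P ω) p.2) ∂ℙ) ^ 2

lemma Gfun_cont (hmeas : Measurable P) (hL2 : Integrable (fun ω => ‖P ω‖ ^ 2) ℙ)
    (α β : ℝ) : Continuous (Gfun ℙ P α β) := by
  have hPn : Integrable (fun ω => ‖P ω‖) ℙ := integrable_normP hmeas hL2
  rw [continuous_iff_continuousAt]
  intro x₀
  have hball : ∀ᶠ x : ℝ × EuclideanSpace ℝ (Fin n) in nhds x₀,
      |x.1| ≤ |x₀.1| + 1 ∧ ‖x.2‖ ≤ ‖x₀.2‖ + 1 := by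
    have h1 : IsOpen {x : ℝ × EuclideanSpace ℝ (Fin n) | |x.1| < |x₀.1| + 1 ∧ ‖x.2‖ < ‖x₀.2‖ + 1} := by
      refine IsOpen.inter ?_ ?_
      · exact isOpen_lt (continuous_fst.abs) continuous_const
      · exact isOpen_lt (continuous_snd.norm) continuous_const
    filter_upwards [h1.eventually_mem (by constructor <;> simp)] with x hx
    exact ⟨hx.1.le, hx.2.le⟩
  set a := |x₀.1| + 1 with ha
  set b := ‖x₀.2‖ + 1 with hb
  have ha0 : 0 ≤ a := by positivity
  have hb0 : 0 ≤ b := by positivity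
  have hmeasx : ∀ x : ℝ × EuclideanSpace ℝ (Fin n),
      Measurable (fun ω => pw α β (x.1 + inner ℝ (P ω) x.2)) := fun x =>
    (pw_continuous α β).measurable.comp (measurable_const.add (measurable_pk hmeas x.2))
  have habs : ∀ (x : ℝ × EuclideanSpace ℝ (Fin n)), |x.1| ≤ a → ‖x.2‖ ≤ b → ∀ ω,
      |pw α β (x.1 + inner ℝ (P ω) x.2)| ≤ (|α| + |β|) * (a + b * ‖P ω‖) := by
    intro x hx1 hx2 ω
    have h1 : |x.1 + inner ℝ (P ω) x.2| ≤ a + b * ‖P ω‖ := by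
      have h2 := abs_pk_le (P := P) x.2 ω
      have h3 : ‖x.2‖ * ‖P ω‖ ≤ b * ‖P ω‖ :=
        mul_le_mul_of_nonneg_right hx2 (norm_nonneg _)
      calc |x.1 + inner ℝ (P ω) x.2| ≤ |x.1| + |(inner ℝ (P ω) x.2 : ℝ)| := abs_add_le _ _
        _ ≤ a + b * ‖P ω‖ := by linarith
    calc |pw α β (x.1 + inner ℝ (P ω) x.2)| ≤ (|α| + |β|) * |x.1 + inner ℝ (P ω) x.2| :=
          abs_pw_le _ _ _
      _ ≤ (|α| + |β|) * (a + b * ‖P ω‖) :=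
          mul_le_mul_of_nonneg_left h1 (by positivity)
  have hcont1 : ContinuousAt (fun x : ℝ × EuclideanSpace ℝ (Fin n) =>
      ∫ ω, pw α β (x.1 + inner ℝ (P ω) x.2) ∂ℙ) x₀ := by
    refine continuousAt_of_dominated (bound := fun ω => (|α| + |β|) * (a + b * ‖P ω‖))
      ?_ ?_ ?_ ?_
    · exact Filter.Eventually.of_forall fun x => (hmeasx x).aestronglyMeasurable
    · filter_upwards [hball] with x hx
      filter_upwards with ω
      exact habs x hx.1 hx.2 ω
    · have e : (fun ω => (|α| + |β|) * (a + b * ‖P ω‖)) =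
          fun ω => (|α| + |β|) * a + ((|α| + |β|) * b) * ‖P ω‖ := funext fun ω => by ring
      rw [e]
      exact (integrable_const _).add (hPn.const_mul _)
    · filter_upwards with ω
      exact ((pw_continuous α β).comp
        (continuous_fst.add (continuous_const.inner continuous_snd))).continuousAt
  have hcont2 : ContinuousAt (fun x : ℝ × EuclideanSpace ℝ (Fin n) =>
      ∫ ω, (pw α β (x.1 + inner ℝ (P ω) x.2)) ^ 2 ∂ℙ) x₀ := by
    refine continuousAt_of_dominated (bound := fun ω => ((|α| + |β|) * (a + b * ‖P ω‖)) ^ 2)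
      ?_ ?_ ?_ ?_
    · exact Filter.Eventually.of_forall fun x =>
        ((hmeasx x).pow measurable_const).aestronglyMeasurable
    · filter_upwards [hball] with x hx
      filter_upwards with ω
      have h := habs x hx.1 hx.2 ω
      have h0 := abs_nonneg (pw α β (x.1 + inner ℝ (P ω) x.2))
      calc ‖(pw α β (x.1 + inner ℝ (P ω) x.2)) ^ 2‖
          = (pw α β (x.1 + inner ℝ (P ω) x.2)) ^ 2 := by
            rw [Real.norm_eq_abs, abs_of_nonneg (sq_nonneg _)]
        _ = |pw α β (x.1 + inner ℝ (P ω) x.2)| ^ 2 := (sq_abs _).symm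
        _ ≤ ((|α| + |β|) * (a + b * ‖P ω‖)) ^ 2 := by nlinarith
    · have e : (fun ω => ((|α| + |β|) * (a + b * ‖P ω‖)) ^ 2) =
          fun ω => (|α| + |β|) ^ 2 * a ^ 2 + ((|α| + |β|) ^ 2 * (2 * a * b)) * ‖P ω‖ +
            ((|α| + |β|) ^ 2 * b ^ 2) * ‖P ω‖ ^ 2 := funext fun ω => by ring
      rw [e]
      exact ((integrable_const _).add (hPn.const_mul _)).add (hL2.const_mul _)
    · filter_upwards with ω
      exact (((pw_continuous α β).comp
        (continuous_fst.add (continuous_const.inner continuous_snd))).pow 2).continuousAt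
  exact hcont2.sub (hcont1.pow 2)

omit [IsProbabilityMeasure ℙ] in
lemma Gfun_scale (α β : ℝ) {t r : ℝ} (hr : 0 < r) (L : EuclideanSpace ℝ (Fin n)) :
    Gfun ℙ P α β (t, r • L) = r ^ 2 * Gfun ℙ P α β (t / r, L) := by
  have e : ∀ ω, pw α β (t + inner ℝ (P ω) (r • L)) = r * pw α β (t / r + inner ℝ (P ω) L) := by
    intro ω
    rw [← pw_smul α β r _ hr.le]
    congr 1
    rw [real_inner_smul_right]
    field_simp
  have e2 : (∫ ω, pw α β (t + inner ℝ (P ω) (r • L)) ∂ℙ) =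
      r * ∫ ω, pw α β (t / r + inner ℝ (P ω) L) ∂ℙ := by
    rw [← integral_const_mul]
    exact integral_congr_ae (Filter.Eventually.of_forall fun ω => e ω)
  have e3 : (∫ ω, (pw α β (t + inner ℝ (P ω) (r • L))) ^ 2 ∂ℙ) =
      r ^ 2 * ∫ ω, (pw α β (t / r + inner ℝ (P ω) L)) ^ 2 ∂ℙ := by
    rw [← integral_const_mul]
    refine integral_congr_ae (Filter.Eventually.of_forall fun ω => ?_)
    show (pw α β (t + inner ℝ (P ω) (r • L))) ^ 2 = r ^ 2 * (pw α β (t / r + inner ℝ (P ω) L)) ^ 2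
    rw [e ω]; ring
  simp only [Gfun]
  rw [e2, e3]
  ring


lemma integrable_pw (hmeas : Measurable P) (hL2 : Integrable (fun ω => ‖P ω‖ ^ 2) ℙ)
    (α β t : ℝ) (L : EuclideanSpace ℝ (Fin n)) :
    Integrable (fun ω => pw α β (t + inner ℝ (P ω) L)) ℙ := by
  refine ((integrable_const ((|α| + |β|) * |t|)).add
      ((integrable_normP hmeas hL2).const_mul ((|α| + |β|) * ‖L‖))).mono
    (((pw_continuous α β).measurable.comp
      (measurable_const.add (measurable_pk hmeas L))).aestronglyMeasurable) ?_
  filter_upwards with ω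
  simp only [Pi.add_apply]
  have h1 : |t + inner ℝ (P ω) L| ≤ |t| + ‖L‖ * ‖P ω‖ := by
    have := abs_pk_le (P := P) L ω
    calc |t + (inner ℝ (P ω) L : ℝ)| ≤ |t| + |(inner ℝ (P ω) L : ℝ)| := abs_add_le _ _
      _ ≤ |t| + ‖L‖ * ‖P ω‖ := by linarith
  have h0 : (0:ℝ) ≤ |α| + |β| := by positivity
  calc ‖pw α β (t + inner ℝ (P ω) L)‖ = |pw α β (t + inner ℝ (P ω) L)| := rfl
    _ ≤ (|α| + |β|) * |t + inner ℝ (P ω) L| := abs_pw_le _ _ _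
    _ ≤ (|α| + |β|) * (|t| + ‖L‖ * ‖P ω‖) := mul_le_mul_of_nonneg_left h1 h0
    _ = (|α| + |β|) * |t| + (|α| + |β|) * ‖L‖ * ‖P ω‖ := by ring
    _ ≤ ‖(|α| + |β|) * |t| + (|α| + |β|) * ‖L‖ * ‖P ω‖‖ := le_abs_self _

lemma integrable_pw_sq (hmeas : Measurable P) (hL2 : Integrable (fun ω => ‖P ω‖ ^ 2) ℙ)
    (α β t : ℝ) (L : EuclideanSpace ℝ (Fin n)) :
    Integrable (fun ω => (pw α β (t + inner ℝ (P ω) L)) ^ 2) ℙ := by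
  have hB : Integrable (fun ω =>
      (|α| + |β|) ^ 2 * |t| ^ 2 + ((|α| + |β|) ^ 2 * (2 * |t| * ‖L‖)) * ‖P ω‖ +
        ((|α| + |β|) ^ 2 * ‖L‖ ^ 2) * ‖P ω‖ ^ 2) ℙ :=
    ((integrable_const _).add ((integrable_normP hmeas hL2).const_mul _)).add
      (hL2.const_mul _)
  refine hB.mono ((((pw_continuous α β).measurable.comp
      (measurable_const.add (measurable_pk hmeas L))).pow
        measurable_const).aestronglyMeasurable) ?_
  filter_upwards with ω
  have h1 : |t + inner ℝ (P ω) L| ≤ |t| + ‖L‖ * ‖P ω‖ := by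
    have := abs_pk_le (P := P) L ω
    calc |t + (inner ℝ (P ω) L : ℝ)| ≤ |t| + |(inner ℝ (P ω) L : ℝ)| := abs_add_le _ _
      _ ≤ |t| + ‖L‖ * ‖P ω‖ := by linarith
  have h0 : (0:ℝ) ≤ |α| + |β| := by positivity
  have h2 : |pw α β (t + inner ℝ (P ω) L)| ≤ (|α| + |β|) * (|t| + ‖L‖ * ‖P ω‖) :=
    (abs_pw_le _ _ _).trans (mul_le_mul_of_nonneg_left h1 h0)
  have h3 := abs_nonneg (pw α β (t + inner ℝ (P ω) L))
  calc ‖(pw α β (t + inner ℝ (P ω) L)) ^ 2‖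
      = (pw α β (t + inner ℝ (P ω) L)) ^ 2 := by
        rw [Real.norm_eq_abs, abs_of_nonneg (sq_nonneg _)]
    _ = |pw α β (t + inner ℝ (P ω) L)| ^ 2 := (sq_abs _).symm
    _ ≤ ((|α| + |β|) * (|t| + ‖L‖ * ‖P ω‖)) ^ 2 := by nlinarith
    _ = (|α| + |β|) ^ 2 * |t| ^ 2 + ((|α| + |β|) ^ 2 * (2 * |t| * ‖L‖)) * ‖P ω‖ +
        ((|α| + |β|) ^ 2 * ‖L‖ ^ 2) * ‖P ω‖ ^ 2 := by ring
    _ ≤ ‖(|α| + |β|) ^ 2 * |t| ^ 2 + ((|α| + |β|) ^ 2 * (2 * |t| * ‖L‖)) * ‖P ω‖ +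
        ((|α| + |β|) ^ 2 * ‖L‖ ^ 2) * ‖P ω‖ ^ 2‖ := le_abs_self _

end FplusAux

/-- Coercivity of `F⁺`: under the two-sidedness, directional atomlessness,
`b⁺ ≥ (a⁺)²`, `b⁻ ≥ (a⁻)²` and `(ρ'+a⁺, ρ'+a⁻) ≠ (0,0)` assumptions,
`F⁺(K) → +∞` as `‖K‖ → +∞`. -/
theorem Fplus_coercive {Ω : Type*} [MeasurableSpace Ω] (ℙ : Measure Ω)
    [IsProbabilityMeasure ℙ] {n : ℕ} (hn : 1 ≤ n)
    (P : Ω → EuclideanSpace ℝ (Fin n)) (hmeas : Measurable P)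
    (hL2 : Integrable (fun ω => ‖P ω‖ ^ 2) ℙ)
    (s ρ' γp ap am bp bm : ℝ) (hs : 0 < s) (hρ : 0 < ρ')
    (htwosided : ∀ L : EuclideanSpace ℝ (Fin n), L ≠ 0 →
      0 < ℙ {ω | 0 < (inner ℝ (P ω) L : ℝ)} ∧ 0 < ℙ {ω | (inner ℝ (P ω) L : ℝ) < 0})
    (hatomless : ∀ L : EuclideanSpace ℝ (Fin n), L ≠ 0 →
      ∀ c : ℝ, ℙ {ω | (inner ℝ (P ω) L : ℝ) = c} = 0)
    (hbp : ap ^ 2 ≤ bp) (hbm : am ^ 2 ≤ bm)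
    (hne : (ρ' + ap, ρ' + am) ≠ ((0 : ℝ), (0 : ℝ))) :
    ∀ M : ℝ, ∃ R > (0 : ℝ), ∀ K : EuclideanSpace ℝ (Fin n),
      R ≤ ‖K‖ → M ≤ Fplus ℙ P s ρ' γp ap am bp bm K := by
  classical
  intro M
  have hne' : (ρ' + ap) ≠ 0 ∨ (ρ' + am) ≠ 0 := by
    by_contra h
    push_neg at h
    exact hne (by rw [h.1, h.2])
  haveI : Nontrivial (EuclideanSpace ℝ (Fin n)) := by
    have : 0 < Module.finrank ℝ (EuclideanSpace ℝ (Fin n)) := by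
      rw [finrank_euclideanSpace_fin]; omega
    exact Module.nontrivial_of_finrank_pos this
  have hsph : IsCompact (Metric.sphere (0 : EuclideanSpace ℝ (Fin n)) 1) :=
    isCompact_sphere 0 1
  have hsne : (Metric.sphere (0 : EuclideanSpace ℝ (Fin n)) 1).Nonempty :=
    NormedSpace.sphere_nonempty.2 zero_le_one
  set G := FplusAux.Gfun ℙ P (ρ' + ap) (ρ' + am) with hG
  have hGc : Continuous G := FplusAux.Gfun_cont hmeas hL2 _ _
  clear_value G
  -- minimum of G(0, ·) over the sphere
  have hcont0 : ContinuousOn (fun L : EuclideanSpace ℝ (Fin n) => G ((0:ℝ), L))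
      (Metric.sphere 0 1) :=
    (hGc.comp ((continuous_const (y := (0:ℝ))).prodMk continuous_id)).continuousOn
  obtain ⟨L₀, hL₀, hmin⟩ := hsph.exists_isMinOn hsne hcont0
  set c0 := G (0, L₀) with hc0
  clear_value c0
  have hL₀n : ‖L₀‖ = 1 := mem_sphere_zero_iff_norm.1 hL₀
  have hL₀ne : L₀ ≠ 0 := by
    intro h; rw [h, norm_zero] at hL₀n; exact one_ne_zero hL₀n.symm
  have hc0pos : 0 < c0 := by
    have h2 := htwosided L₀ hL₀ne
    have h3 := hatomless L₀ hL₀ne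
    have i1 : Integrable (fun ω => FplusAux.pw (ρ' + ap) (ρ' + am) (inner ℝ (P ω) L₀)) ℙ :=
      (FplusAux.integrable_pw hmeas hL2 (ρ' + ap) (ρ' + am) 0 L₀).congr
        (Filter.Eventually.of_forall fun ω => by simp only [zero_add])
    have i2 : Integrable (fun ω => (FplusAux.pw (ρ' + ap) (ρ' + am) (inner ℝ (P ω) L₀)) ^ 2) ℙ :=
      (FplusAux.integrable_pw_sq hmeas hL2 (ρ' + ap) (ρ' + am) 0 L₀).congr
        (Filter.Eventually.of_forall fun ω => by simp only [zero_add])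
    have hvar : 0 < (∫ ω, (FplusAux.pw (ρ' + ap) (ρ' + am) (inner ℝ (P ω) L₀)) ^ 2 ∂ℙ) -
        (∫ ω, FplusAux.pw (ρ' + ap) (ρ' + am) (inner ℝ (P ω) L₀) ∂ℙ) ^ 2 :=
      FplusAux.var_pos _ _ hne' h2.1 h2.2 h3 i1 i2
    have hGeq : c0 = (∫ ω, (FplusAux.pw (ρ' + ap) (ρ' + am) (inner ℝ (P ω) L₀)) ^ 2 ∂ℙ) -
        (∫ ω, FplusAux.pw (ρ' + ap) (ρ' + am) (inner ℝ (P ω) L₀) ∂ℙ) ^ 2 := by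
      rw [hc0, hG]
      simp only [FplusAux.Gfun, zero_add]
    rw [hGeq]
    exact hvar
  -- tube: find t₀ such that G ≥ c0/2 on [0, t₀] × sphere
  set D := (Set.Icc (0:ℝ) s) ×ˢ (Metric.sphere (0 : EuclideanSpace ℝ (Fin n)) 1) with hD
  have hDc : IsCompact D := isCompact_Icc.prod hsph
  set B := D ∩ {p | G p ≤ c0 / 2} with hBdef
  have hBc : IsCompact B := hDc.inter_right (isClosed_le hGc continuous_const)
  obtain ⟨t₀, ht₀pos, ht₀s, hGlb⟩ :
      ∃ t₀ : ℝ, 0 < t₀ ∧ t₀ ≤ s ∧ ∀ p ∈ D, p.1 ≤ t₀ → c0 / 2 ≤ G p := by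
    by_cases hBne : B.Nonempty
    · obtain ⟨p₁, hp₁, hp₁min⟩ := hBc.exists_isMinOn hBne continuous_fst.continuousOn
      have hp₁D : p₁ ∈ D := hp₁.1
      have hp₁pos : 0 < p₁.1 := by
        rcases (hp₁D.1.1).lt_or_eq with h | h
        · exact h
        · exfalso
          have hball : c0 ≤ G (0, p₁.2) := by
            rw [hc0]
            simpa using hmin hp₁D.2
          have : (0, p₁.2) = p₁ := by rw [h]
          rw [this] at hball
          have := hp₁.2
          simp only [Set.mem_setOf_eq] at this
          linarith
      refine ⟨p₁.1 / 2, by linarith, by linarith [hp₁D.1.2], ?_⟩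
      intro p hp hple
      by_contra hpc
      push_neg at hpc
      have hpB : p ∈ B := ⟨hp, le_of_lt hpc⟩
      have := hp₁min hpB
      simp only [Set.mem_setOf_eq] at this
      have : p₁.1 ≤ p.1 := this
      linarith
    · refine ⟨s, hs, le_refl s, ?_⟩
      intro p hp _
      by_contra hpc
      push_neg at hpc
      exact hBne ⟨p, hp, le_of_lt hpc⟩
  -- constants
  set CP := ∫ ω, ‖P ω‖ ∂ℙ with hCP
  have hCP0 : 0 ≤ CP := integral_nonneg fun ω => norm_nonneg _
  clear_value CP
  set Cab := |ρ' + ap| + |ρ' + am| with hCab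
  have hCab0 : 0 ≤ Cab := by rw [hCab]; positivity
  clear_value Cab
  set D₀ := max M 0 + |γp| * (Cab * s) + |γp| * (Cab * CP) + 1 with hD₀
  clear_value D₀
  have hD₀pos : 0 < D₀ := by
    rw [hD₀]
    have h1 : 0 ≤ max M 0 := le_max_right M 0
    have h2 : 0 ≤ |γp| * (Cab * s) := by positivity
    have h3 : 0 ≤ |γp| * (Cab * CP) := by positivity
    linarith
  refine ⟨max (max 1 (s / t₀)) (D₀ / (c0 / 2)), by
    have : (1:ℝ) ≤ max (max 1 (s / t₀)) (D₀ / (c0 / 2)) :=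
      le_trans (le_max_left _ _) (le_max_left _ _)
    linarith, ?_⟩
  intro K hK
  have hR1 : (1:ℝ) ≤ ‖K‖ :=
    le_trans (le_trans (le_max_left _ _) (le_max_left _ _)) hK
  have hr0 : (0:ℝ) < ‖K‖ := by linarith
  set r := ‖K‖ with hr
  set L : EuclideanSpace ℝ (Fin n) := r⁻¹ • K with hLdef
  clear_value L
  clear_value r
  have hLn : ‖L‖ = 1 := by
    have hrabs : |r| = r := abs_of_nonneg (by rw [hr]; exact norm_nonneg K)
    rw [hLdef, norm_smul, norm_inv, Real.norm_eq_abs, hrabs, ← hr]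
    exact inv_mul_cancel₀ hr0.ne' 
  have hKL : K = r • L := by
    rw [hLdef, smul_inv_smul₀ hr0.ne' K]
  -- lower bound for the variance term
  have hst : s / r ≤ t₀ := by
    have h1 : s / t₀ ≤ r := le_trans (le_trans (le_max_right _ _) (le_max_left _ _)) hK
    rw [div_le_iff₀ ht₀pos] at h1
    rw [div_le_iff₀ hr0]
    nlinarith
  have hDmem : (s / r, L) ∈ D := by
    constructor
    · exact ⟨le_of_lt (div_pos hs hr0), le_trans hst ht₀s⟩
    · exact mem_sphere_zero_iff_norm.2 hLn
  have hGsK : r ^ 2 * (c0 / 2) ≤ G (s, K) := by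
    have hscale : G (s, K) = r ^ 2 * G (s / r, L) := by
      rw [hG]
      conv_lhs => rw [hKL]
      exact FplusAux.Gfun_scale _ _ hr0 L
    rw [hscale]
    exact mul_le_mul_of_nonneg_left (hGlb _ hDmem hst) (by positivity)
  -- upper bound for the mean term
  have hmean : |∫ ω, FplusAux.pw (ρ' + ap) (ρ' + am) (s + inner ℝ (P ω) K) ∂ℙ| ≤
      Cab * s + (Cab * CP) * r := by
    have hiY := FplusAux.integrable_pw hmeas hL2 (ρ' + ap) (ρ' + am) s K
    have h1 : |∫ ω, FplusAux.pw (ρ' + ap) (ρ' + am) (s + inner ℝ (P ω) K) ∂ℙ| ≤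
        ∫ ω, |FplusAux.pw (ρ' + ap) (ρ' + am) (s + inner ℝ (P ω) K)| ∂ℙ := by
      have := norm_integral_le_integral_norm (μ := ℙ)
        (fun ω => FplusAux.pw (ρ' + ap) (ρ' + am) (s + inner ℝ (P ω) K))
      simpa [Real.norm_eq_abs] using this
    have h2 : (∫ ω, |FplusAux.pw (ρ' + ap) (ρ' + am) (s + inner ℝ (P ω) K)| ∂ℙ) ≤
        ∫ ω, Cab * s + (Cab * r) * ‖P ω‖ ∂ℙ := by
      refine integral_mono hiY.abs
        ((integrable_const _).add ((FplusAux.integrable_normP hmeas hL2).const_mul _)) ?_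
      intro ω
      have hpk := FplusAux.abs_pk_le (P := P) K ω
      have hx : |s + inner ℝ (P ω) K| ≤ s + r * ‖P ω‖ := by
        calc |s + (inner ℝ (P ω) K : ℝ)| ≤ |s| + |(inner ℝ (P ω) K : ℝ)| := abs_add_le _ _
          _ ≤ s + r * ‖P ω‖ := by rw [abs_of_pos hs, hr]; linarith
      calc |FplusAux.pw (ρ' + ap) (ρ' + am) (s + inner ℝ (P ω) K)| ≤
            Cab * |s + inner ℝ (P ω) K| := by rw [hCab]; exact FplusAux.abs_pw_le _ _ _
        _ ≤ Cab * (s + r * ‖P ω‖) := mul_le_mul_of_nonneg_left hx hCab0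
        _ = Cab * s + (Cab * r) * ‖P ω‖ := by ring
    have h3 : (∫ ω, Cab * s + (Cab * r) * ‖P ω‖ ∂ℙ) = Cab * s + (Cab * CP) * r := by
      rw [integral_add (integrable_const _)
        ((FplusAux.integrable_normP hmeas hL2).const_mul _), integral_const,
        integral_const_mul]
      simp [measure_univ, ← hCP]
      ring
    rw [h3] at h2
    exact le_trans h1 h2
  -- conclude
  have hFge := FplusAux.Fplus_ge hmeas hL2 s ρ' γp ap am bp bm hbp hbm K
  have hGdef : G (s, K) = (∫ ω, (FplusAux.pw (ρ' + ap) (ρ' + am) (s + inner ℝ (P ω) K)) ^ 2 ∂ℙ) -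
      (∫ ω, FplusAux.pw (ρ' + ap) (ρ' + am) (s + inner ℝ (P ω) K) ∂ℙ) ^ 2 := by
    rw [hG]; simp only [FplusAux.Gfun]
  have hd : D₀ ≤ (c0 / 2) * r := by
    have h1 : D₀ / (c0 / 2) ≤ r := le_trans (le_max_right _ _) hK
    rw [div_le_iff₀ (by linarith : (0:ℝ) < c0 / 2)] at h1
    linarith [h1]
  have hd2 : D₀ * r ≤ ((c0 / 2) * r) * r :=
    mul_le_mul_of_nonneg_right hd (by linarith)
  have hmean2 : γp * (∫ ω, FplusAux.pw (ρ' + ap) (ρ' + am) (s + inner ℝ (P ω) K) ∂ℙ) ≤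
      |γp| * (Cab * s + (Cab * CP) * r) := by
    calc γp * (∫ ω, FplusAux.pw (ρ' + ap) (ρ' + am) (s + inner ℝ (P ω) K) ∂ℙ) ≤
          |γp * (∫ ω, FplusAux.pw (ρ' + ap) (ρ' + am) (s + inner ℝ (P ω) K) ∂ℙ)| := le_abs_self _
      _ = |γp| * |∫ ω, FplusAux.pw (ρ' + ap) (ρ' + am) (s + inner ℝ (P ω) K) ∂ℙ| := abs_mul _ _
      _ ≤ |γp| * (Cab * s + (Cab * CP) * r) :=
          mul_le_mul_of_nonneg_left hmean (abs_nonneg _)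
  have hMr : max M 0 + |γp| * (Cab * s) + (|γp| * (Cab * CP)) * r ≤ D₀ * r := by
    rw [hD₀]
    have h1 : 0 ≤ max M 0 := le_max_right M 0
    have h2 : 0 ≤ |γp| * (Cab * s) := by positivity
    have h3 : 0 ≤ |γp| * (Cab * CP) := by positivity
    nlinarith [hR1]
  calc M ≤ max M 0 := le_max_left M 0
    _ ≤ (c0 / 2) * r * r - |γp| * (Cab * s) - (|γp| * (Cab * CP)) * r := by
        nlinarith [hd2, hMr]
    _ ≤ G (s, K) - γp * (∫ ω, FplusAux.pw (ρ' + ap) (ρ' + am) (s + inner ℝ (P ω) K) ∂ℙ) := by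
        have : r ^ 2 * (c0 / 2) = (c0 / 2) * r * r := by ring
        rw [this] at hGsK
        have h6 : |γp| * (Cab * s + (Cab * CP) * r) =
            |γp| * (Cab * s) + (|γp| * (Cab * CP)) * r := by ring
        rw [h6] at hmean2
        linarith
    _ = (∫ ω, (FplusAux.pw (ρ' + ap) (ρ' + am) (s + inner ℝ (P ω) K)) ^ 2 ∂ℙ) -
        (∫ ω, FplusAux.pw (ρ' + ap) (ρ' + am) (s + inner ℝ (P ω) K) ∂ℙ) ^ 2 -
        γp * (∫ ω, FplusAux.pw (ρ' + ap) (ρ' + am) (s + inner ℝ (P ω) K) ∂ℙ) := by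
        rw [hGdef]
    _ ≤ Fplus ℙ P s ρ' γp ap am bp bm K := hFge
end

section
/- Let y be a real random variable with E[y²] < ∞ whose law is atomless and which satisfies ℙ(y > 0) > 0 and ℙ(y < 0) > 0. Then the 2×2 covariance matrix of the pair (y·1{y ≥ 0}, y·1{y < 0}) is positive definite; equivalently, for every (v₁, v₂) ∈ ℝ² with (v₁, v₂) ≠ (0,0) one has Var(v₁·y·1{y ≥ 0} + v₂·y·1{y < 0}) > 0. -/
open MeasureTheory

/-- If `y` is a square-integrable real random variable with atomless law and
`ℙ(y > 0) > 0`, `ℙ(y < 0) > 0`, then the covariance matrix of the pair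
`(y·1{y ≥ 0}, y·1{y < 0})` is positive definite; equivalently, for every
`(v₁, v₂) ≠ (0, 0)` the variance of `v₁·y·1{y ≥ 0} + v₂·y·1{y < 0}` is
strictly positive, where `Var(Z) = E[Z²] − (E[Z])²`. -/
theorem variance_combination_indicator_pos {Ω : Type*} [MeasurableSpace Ω]
    (ℙ : Measure Ω) [IsProbabilityMeasure ℙ]
    (y : Ω → ℝ) (hmeas : Measurable y)
    (hL2 : Integrable (fun ω => (y ω) ^ 2) ℙ)
    (hatomless : ∀ c : ℝ, ℙ {ω | y ω = c} = 0)
    (hpos : 0 < ℙ {ω | 0 < y ω}) (hneg : 0 < ℙ {ω | y ω < 0}) :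
    ∀ v₁ v₂ : ℝ, (v₁, v₂) ≠ ((0 : ℝ), (0 : ℝ)) →
      0 < (∫ ω, (v₁ * y ω * (if 0 ≤ y ω then (1:ℝ) else 0)
              + v₂ * y ω * (if y ω < 0 then (1:ℝ) else 0)) ^ 2 ∂ℙ)
          - (∫ ω, v₁ * y ω * (if 0 ≤ y ω then (1:ℝ) else 0)
              + v₂ * y ω * (if y ω < 0 then (1:ℝ) else 0) ∂ℙ) ^ 2 := by
  intro v₁ v₂ hv
  set Z : Ω → ℝ := fun ω => v₁ * y ω * (if 0 ≤ y ω then (1:ℝ) else 0)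
      + v₂ * y ω * (if y ω < 0 then (1:ℝ) else 0) with hZ
  -- Memℒp facts
  have hy2 : MemLp y 2 ℙ := by
    rw [memLp_two_iff_integrable_sq hmeas.aestronglyMeasurable]
    simpa [sq] using hL2
  have hf : (fun ω => y ω * (if 0 ≤ y ω then (1:ℝ) else 0))
      = Set.indicator {ω | 0 ≤ y ω} y := by
    ext ω; by_cases h : 0 ≤ y ω <;> simp [Set.indicator, h]
  have hg : (fun ω => y ω * (if y ω < 0 then (1:ℝ) else 0))
      = Set.indicator {ω | y ω < 0} y := by
    ext ω; by_cases h : y ω < 0 <;> simp [Set.indicator, h]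
  have hfL2 : MemLp (fun ω => y ω * (if 0 ≤ y ω then (1:ℝ) else 0)) 2 ℙ := by
    rw [hf]; exact hy2.indicator (hmeas measurableSet_Ici)
  have hgL2 : MemLp (fun ω => y ω * (if y ω < 0 then (1:ℝ) else 0)) 2 ℙ := by
    rw [hg]; exact hy2.indicator (hmeas measurableSet_Iio)
  have hZL2 : MemLp Z 2 ℙ := by
    have h := (hfL2.const_mul v₁).add (hgL2.const_mul v₂)
    convert h using 1
    funext ω; simp only [Pi.add_apply]; ring
  -- variance identity
  have hvar := ProbabilityTheory.variance_eq_sub hZL2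
  have hgoal : (∫ ω, (Z ω) ^ 2 ∂ℙ) - (∫ ω, Z ω ∂ℙ) ^ 2
      = ProbabilityTheory.variance Z ℙ := by
    rw [hvar]; simp
  show 0 < (∫ ω, (Z ω) ^ 2 ∂ℙ) - (∫ ω, Z ω ∂ℙ) ^ 2
  rw [hgoal]
  -- positivity of variance
  rw [ProbabilityTheory.variance]
  apply ENNReal.toReal_pos ?_ hZL2.evariance_lt_top.ne
  intro h0
  rw [ProbabilityTheory.evariance_eq_zero_iff hZL2.aestronglyMeasurable.aemeasurable] at h0
  set c : ℝ := ∫ ω, Z ω ∂ℙ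
  by_cases hv1 : v₁ = 0
  · have hv2 : v₂ ≠ 0 := by
      intro hv2; exact hv (by simp [hv1, hv2, Prod.ext_iff])
    have hne : ∀ᵐ ω ∂ℙ, y ω ≠ c / v₂ := by
      rw [ae_iff]; simpa using hatomless (c / v₂)
    have hbad : ∀ᵐ ω ∂ℙ, ¬ (y ω < 0) := by
      filter_upwards [h0, hne] with ω h1 h2
      intro hlt
      have hz : Z ω = v₂ * y ω := by
        simp [hZ, if_pos hlt, if_neg (not_le.mpr hlt)]
      apply h2
      have : v₂ * y ω = c := by rw [← hz]; exact h1
      field_simp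
      linarith [this]
    rw [ae_iff] at hbad
    simp only [not_not] at hbad
    exact absurd hbad hneg.ne'
  · have hne : ∀ᵐ ω ∂ℙ, y ω ≠ c / v₁ := by
      rw [ae_iff]; simpa using hatomless (c / v₁)
    have hbad : ∀ᵐ ω ∂ℙ, ¬ (0 < y ω) := by
      filter_upwards [h0, hne] with ω h1 h2
      intro hlt
      have hz : Z ω = v₁ * y ω := by
        simp [hZ, if_pos hlt.le, if_neg (not_lt.mpr hlt.le)]
      apply h2
      have : v₁ * y ω = c := by rw [← hz]; exact h1
      field_simp
      linarith [this]
    rw [ae_iff] at hbad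
    simp only [not_not] at hbad
    exact absurd hbad hpos.ne'
end

section
/- Suppose P is two-sided and directionally atomless, that b⁺ ≥ (a⁺)² and b⁻ ≥ (a⁻)², and that (ρ'+a⁺, ρ'+a⁻) ≠ (0,0). Then F⁺ attains a global minimum on ℝⁿ (there exists K⁺ ∈ ℝⁿ with F⁺(K⁺) ≤ F⁺(K) for all K ∈ ℝⁿ), and likewise F⁻ attains a global minimum on ℝⁿ. -/
open MeasureTheory

/-- The function `F⁻` from the paper, written with expectations as Bochner integrals. -/
noncomputable def Fminus {Ω : Type*} [MeasurableSpace Ω] (ℙ : Measure Ω) {n : ℕ}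
    (P : Ω → EuclideanSpace ℝ (Fin n)) (s ρ' γm ap am bp bm : ℝ)
    (K : EuclideanSpace ℝ (Fin n)) : ℝ :=
  let pk : Ω → ℝ := fun ω => inner ℝ (P ω) K
  let A : ℝ :=
    (∫ ω, ap * (s + pk ω) * (if s + pk ω ≤ 0 then (1:ℝ) else 0) ∂ℙ) +
    (∫ ω, am * (s + pk ω) * (if 0 < s + pk ω then (1:ℝ) else 0) ∂ℙ)
  ρ' ^ 2 * ((∫ ω, (pk ω) ^ 2 ∂ℙ) - (∫ ω, pk ω ∂ℙ) ^ 2) +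
  (∫ ω, (2 * ρ' * ap + bp) * (s + pk ω) ^ 2 * (if s + pk ω ≤ 0 then (1:ℝ) else 0) ∂ℙ) +
  (∫ ω, (2 * ρ' * am + bm) * (s + pk ω) ^ 2 * (if 0 < s + pk ω then (1:ℝ) else 0) ∂ℙ) -
  A ^ 2 - 2 * ρ' * A * (s + ∫ ω, pk ω ∂ℙ) + γm * A +
  ρ' * γm * (s + ∫ ω, pk ω ∂ℙ)


open Filter Topology

namespace FFmin

noncomputable def phiZ (c d y : ℝ) : ℝ := c * max y 0 + d * min y 0

lemma phiZ_continuous (c d : ℝ) : Continuous (phiZ c d) :=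
  ((continuous_const.mul (continuous_id.max continuous_const)).add
    (continuous_const.mul (continuous_id.min continuous_const)))

lemma abs_max_le (y : ℝ) : |max y 0| ≤ |y| := by
  rcases le_total y 0 with h | h
  · simp [max_eq_right h]
  · rw [max_eq_left h]

lemma abs_min_le (y : ℝ) : |min y 0| ≤ |y| := by
  rcases le_total y 0 with h | h
  · rw [min_eq_left h]
  · simp [min_eq_right h]

lemma max_mul_min (y : ℝ) : max y 0 * min y 0 = 0 := by
  rcases le_total y 0 with h | h
  · rw [max_eq_right h, zero_mul]
  · rw [min_eq_right h, mul_zero]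

lemma phiZ_abs_le (c d y : ℝ) : |phiZ c d y| ≤ (|c| + |d|) * |y| := by
  unfold phiZ
  have h1 := abs_max_le y
  have h2 := abs_min_le y
  calc |c * max y 0 + d * min y 0| ≤ |c * max y 0| + |d * min y 0| := abs_add_le _ _
    _ = |c| * |max y 0| + |d| * |min y 0| := by rw [abs_mul, abs_mul]
    _ ≤ (|c| + |d|) * |y| := by nlinarith [abs_nonneg c, abs_nonneg d, abs_nonneg y]

lemma phiZ_lip (c d y z : ℝ) : |phiZ c d y - phiZ c d z| ≤ (|c| + |d|) * |y - z| := by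
  have h1 : |max y 0 - max z 0| ≤ |y - z| := abs_max_sub_max_le_abs y z 0
  have h2 : |min y 0 - min z 0| ≤ |y - z| := by
    simpa only [sub_self, abs_zero, max_eq_left (abs_nonneg (y - z))]
      using abs_min_sub_min_le_max y 0 z 0
  have e : phiZ c d y - phiZ c d z
      = c * (max y 0 - max z 0) + d * (min y 0 - min z 0) := by unfold phiZ; ring
  rw [e]
  calc |c * (max y 0 - max z 0) + d * (min y 0 - min z 0)|
      ≤ |c * (max y 0 - max z 0)| + |d * (min y 0 - min z 0)| := abs_add_le _ _
    _ = |c| * |max y 0 - max z 0| + |d| * |min y 0 - min z 0| := by rw [abs_mul, abs_mul]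
    _ ≤ (|c| + |d|) * |y - z| := by
        nlinarith [abs_nonneg c, abs_nonneg d, abs_nonneg (y - z)]

lemma phiZ_smul (c d : ℝ) {r : ℝ} (hr : 0 ≤ r) (y : ℝ) :
    phiZ c d (r * y) = r * phiZ c d y := by
  unfold phiZ
  rcases le_total y 0 with h | h
  · have hy : r * y ≤ 0 := mul_nonpos_of_nonneg_of_nonpos hr h
    rw [max_eq_right hy, max_eq_right h, min_eq_left hy, min_eq_left h]; ring
  · have hy : 0 ≤ r * y := mul_nonneg hr h
    rw [max_eq_left hy, max_eq_left h, min_eq_right hy, min_eq_right h]; ring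





variable {Ω : Type*} [MeasurableSpace Ω] {ℙ : Measure Ω} [IsProbabilityMeasure ℙ]
  {n : ℕ} {P : Ω → EuclideanSpace ℝ (Fin n)}

lemma integrable_of_bound (hL2 : Integrable (fun ω => ‖P ω‖ ^ 2) ℙ)
    {f : Ω → ℝ} (hf : AEStronglyMeasurable f ℙ) (C : ℝ)
    (hb : ∀ ω, |f ω| ≤ C * (1 + ‖P ω‖ ^ 2)) : Integrable f ℙ := by
  have hint : Integrable (fun ω => C * (1 + ‖P ω‖ ^ 2)) ℙ :=
    ((integrable_const (1 : ℝ)).add hL2).const_mul C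
  refine hint.mono hf (Eventually.of_forall fun ω => ?_)
  rw [Real.norm_eq_abs, Real.norm_eq_abs]
  exact (hb ω).trans (le_abs_self _)

lemma integrable_comp (hmeas : Measurable P) (hL2 : Integrable (fun ω => ‖P ω‖ ^ 2) ℙ)
    {g : ℝ → ℝ} (hg : Measurable g) {C : ℝ} (hgb : ∀ y, |g y| ≤ C * (1 + y ^ 2))
    (K : EuclideanSpace ℝ (Fin n)) :
    Integrable (fun ω => g (inner ℝ (P ω) K : ℝ)) ℙ := by
  refine integrable_of_bound hL2
    ((hg.comp (hmeas.inner measurable_const)).aestronglyMeasurable)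
    (|C| * (1 + ‖K‖ ^ 2)) (fun ω => ?_)
  have hx : |(inner ℝ (P ω) K : ℝ)| ≤ ‖P ω‖ * ‖K‖ := abs_real_inner_le_norm _ _
  have hx2 : (inner ℝ (P ω) K : ℝ) ^ 2 ≤ (‖P ω‖ * ‖K‖) ^ 2 := by
    rw [← sq_abs]
    exact pow_le_pow_left₀ (abs_nonneg _) hx 2
  have h1 := hgb (inner ℝ (P ω) K : ℝ)
  have h2 : (0:ℝ) ≤ 1 + (inner ℝ (P ω) K : ℝ) ^ 2 := by positivity
  have h3 : C * (1 + (inner ℝ (P ω) K : ℝ) ^ 2) ≤ |C| * (1 + (inner ℝ (P ω) K : ℝ) ^ 2) :=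
    mul_le_mul_of_nonneg_right (le_abs_self C) h2
  have h4 : (1 : ℝ) + (inner ℝ (P ω) K : ℝ) ^ 2 ≤ (1 + ‖K‖ ^ 2) * (1 + ‖P ω‖ ^ 2) := by
    nlinarith [sq_nonneg (‖P ω‖ : ℝ), sq_nonneg ‖K‖]
  calc |g (inner ℝ (P ω) K : ℝ)| ≤ C * (1 + (inner ℝ (P ω) K : ℝ) ^ 2) := h1
    _ ≤ |C| * (1 + (inner ℝ (P ω) K : ℝ) ^ 2) := h3
    _ ≤ |C| * ((1 + ‖K‖ ^ 2) * (1 + ‖P ω‖ ^ 2)) :=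
        mul_le_mul_of_nonneg_left h4 (abs_nonneg C)
    _ = |C| * (1 + ‖K‖ ^ 2) * (1 + ‖P ω‖ ^ 2) := by ring

lemma cont_integral (hmeas : Measurable P) (hL2 : Integrable (fun ω => ‖P ω‖ ^ 2) ℙ)
    {g : ℝ → ℝ} (hg : Continuous g) {C : ℝ} (hgb : ∀ y, |g y| ≤ C * (1 + y ^ 2)) :
    Continuous fun K : EuclideanSpace ℝ (Fin n) => ∫ ω, g (inner ℝ (P ω) K : ℝ) ∂ℙ := by
  rw [continuous_iff_continuousAt]
  intro K₀
  have hball : ∀ᶠ K : EuclideanSpace ℝ (Fin n) in 𝓝 K₀, ‖K‖ ≤ ‖K₀‖ + 1 := by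
    filter_upwards [Metric.closedBall_mem_nhds K₀ one_pos] with K hK
    have h1 : ‖K - K₀‖ ≤ 1 := mem_closedBall_iff_norm.mp hK
    calc ‖K‖ = ‖K - K₀ + K₀‖ := by rw [sub_add_cancel]
      _ ≤ ‖K - K₀‖ + ‖K₀‖ := norm_add_le _ _
      _ ≤ ‖K₀‖ + 1 := by linarith
  refine continuousAt_of_dominated
    (bound := fun ω => |C| * (1 + (‖K₀‖ + 1) ^ 2) * (1 + ‖P ω‖ ^ 2)) ?_ ?_ ?_ ?_
  · exact Eventually.of_forall fun K =>
      (hg.measurable.comp (hmeas.inner measurable_const)).aestronglyMeasurable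
  · filter_upwards [hball] with K hK
    refine Eventually.of_forall fun ω => ?_
    rw [Real.norm_eq_abs]
    have hx : |(inner ℝ (P ω) K : ℝ)| ≤ ‖P ω‖ * ‖K‖ := abs_real_inner_le_norm _ _
    have hx2 : (inner ℝ (P ω) K : ℝ) ^ 2 ≤ (‖P ω‖ * (‖K₀‖ + 1)) ^ 2 := by
      rw [← sq_abs]
      have h5 : ‖P ω‖ * ‖K‖ ≤ ‖P ω‖ * (‖K₀‖ + 1) :=
        mul_le_mul_of_nonneg_left hK (norm_nonneg _)
      have h6 : (0:ℝ) ≤ ‖P ω‖ * (‖K₀‖ + 1) := by positivity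
      nlinarith [abs_nonneg (inner ℝ (P ω) K : ℝ)]
    have h1 := hgb (inner ℝ (P ω) K : ℝ)
    have h2 : (0:ℝ) ≤ 1 + (inner ℝ (P ω) K : ℝ) ^ 2 := by positivity
    have h3 : C * (1 + (inner ℝ (P ω) K : ℝ) ^ 2) ≤ |C| * (1 + (inner ℝ (P ω) K : ℝ) ^ 2) :=
      mul_le_mul_of_nonneg_right (le_abs_self C) h2
    have h4 : (1:ℝ) + (inner ℝ (P ω) K : ℝ) ^ 2 ≤ (1 + (‖K₀‖ + 1) ^ 2) * (1 + ‖P ω‖ ^ 2) := by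
      nlinarith [sq_nonneg (‖P ω‖ : ℝ), sq_nonneg (‖K₀‖ + 1)]
    calc |g (inner ℝ (P ω) K : ℝ)| ≤ C * (1 + (inner ℝ (P ω) K : ℝ) ^ 2) := h1
      _ ≤ |C| * (1 + (inner ℝ (P ω) K : ℝ) ^ 2) := h3
      _ ≤ |C| * ((1 + (‖K₀‖ + 1) ^ 2) * (1 + ‖P ω‖ ^ 2)) :=
          mul_le_mul_of_nonneg_left h4 (abs_nonneg C)
      _ = |C| * (1 + (‖K₀‖ + 1) ^ 2) * (1 + ‖P ω‖ ^ 2) := by ring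
  · exact ((integrable_const (1 : ℝ)).add hL2).const_mul _
  · exact Eventually.of_forall fun ω =>
      (hg.comp (continuous_const.inner continuous_id)).continuousAt



lemma varE {Z : Ω → ℝ} (hZ : Integrable Z ℙ) (hZ2 : Integrable (fun ω => Z ω ^ 2) ℙ) :
    ∫ ω, (Z ω - ∫ ω', Z ω' ∂ℙ) ^ 2 ∂ℙ = (∫ ω, Z ω ^ 2 ∂ℙ) - (∫ ω, Z ω ∂ℙ) ^ 2 := by
  set μ := ∫ ω, Z ω ∂ℙ with hμ
  have h : (fun ω => (Z ω - μ) ^ 2) = fun ω => Z ω ^ 2 - 2 * μ * Z ω + μ ^ 2 := by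
    funext ω; ring
  have ha : Integrable (fun ω => Z ω ^ 2 - 2 * μ * Z ω) ℙ := hZ2.sub (hZ.const_mul (2 * μ))
  rw [h, integral_add ha (integrable_const _),
    integral_sub hZ2 (hZ.const_mul (2 * μ)), integral_const_mul, integral_const]
  simp only [measure_univ, probReal_univ, ENNReal.toReal_one, one_smul, smul_eq_mul]
  ring

lemma var_nonneg {Z : Ω → ℝ} (hZ : Integrable Z ℙ) (hZ2 : Integrable (fun ω => Z ω ^ 2) ℙ) :
    0 ≤ (∫ ω, Z ω ^ 2 ∂ℙ) - (∫ ω, Z ω ∂ℙ) ^ 2 := by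
  rw [← varE hZ hZ2]
  exact integral_nonneg fun ω => sq_nonneg _

lemma var_lower {U W : Ω → ℝ} {δ : ℝ} (hδ : 0 ≤ δ)
    (hUm : AEStronglyMeasurable U ℙ) (hWm : AEStronglyMeasurable W ℙ)
    (hU : Integrable U ℙ) (hU2 : Integrable (fun ω => U ω ^ 2) ℙ)
    (hWb : ∀ ω, |W ω| ≤ δ) :
    (∫ ω, U ω ^ 2 ∂ℙ) - (∫ ω, U ω ∂ℙ) ^ 2 - 4 * δ * ∫ ω, |U ω - ∫ ω', U ω' ∂ℙ| ∂ℙ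
      ≤ (∫ ω, (U ω + W ω) ^ 2 ∂ℙ) - (∫ ω, (U ω + W ω) ∂ℙ) ^ 2 := by
  set μU := ∫ ω, U ω ∂ℙ with hμU
  have hW : Integrable W ℙ := by
    refine (integrable_const δ).mono hWm (Eventually.of_forall fun ω => ?_)
    rw [Real.norm_eq_abs, Real.norm_eq_abs, abs_of_nonneg hδ]; exact hWb ω
  set μW := ∫ ω, W ω ∂ℙ with hμW
  have hμWb : |μW| ≤ δ := by
    rw [hμW, ← Real.norm_eq_abs]
    calc ‖∫ ω, W ω ∂ℙ‖ ≤ ∫ ω, ‖W ω‖ ∂ℙ := norm_integral_le_integral_norm _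
      _ ≤ ∫ _ω, δ ∂ℙ := integral_mono hW.norm (integrable_const δ)
          (fun ω => by rw [Real.norm_eq_abs]; exact hWb ω)
      _ = δ := by simp
  have hWc : ∀ ω, |W ω - μW| ≤ 2 * δ := fun ω => by
    have h1 := hWb ω
    calc |W ω - μW| ≤ |W ω| + |μW| := abs_sub _ _
      _ ≤ 2 * δ := by linarith
  have hUc : Integrable (fun ω => U ω - μU) ℙ := hU.sub (integrable_const _)
  have hUabs : Integrable (fun ω => |U ω - μU|) ℙ := hUc.abs
  have hUc2 : Integrable (fun ω => (U ω - μU) ^ 2) ℙ := by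
    have h : (fun ω => (U ω - μU) ^ 2) = fun ω => U ω ^ 2 - 2 * μU * U ω + μU ^ 2 := by
      funext ω; ring
    rw [h]; exact (hU2.sub (hU.const_mul _)).add (integrable_const _)
  have hprodb : ∀ ω, |(U ω - μU) * (W ω - μW)| ≤ 2 * δ * |U ω - μU| := fun ω => by
    rw [abs_mul]
    have := hWc ω
    nlinarith [abs_nonneg (U ω - μU), abs_nonneg (W ω - μW)]
  have hprod : Integrable (fun ω => (U ω - μU) * (W ω - μW)) ℙ := by
    refine (hUabs.const_mul (2 * δ)).mono
      ((hUm.sub aestronglyMeasurable_const).mul (hWm.sub aestronglyMeasurable_const))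
      (Eventually.of_forall fun ω => ?_)
    rw [Real.norm_eq_abs, Real.norm_eq_abs, abs_of_nonneg (by positivity : (0:ℝ) ≤ 2 * δ * |U ω - μU|)]
    exact hprodb ω
  have hWc2 : Integrable (fun ω => (W ω - μW) ^ 2) ℙ := by
    refine (integrable_const ((2 * δ) ^ 2)).mono
      ?_ (Eventually.of_forall fun ω => ?_)
    · have h : (fun ω => (W ω - μW) ^ 2) = fun ω => (W ω - μW) * (W ω - μW) := by
        funext ω; ring
      rw [h]
      exact (hWm.sub aestronglyMeasurable_const).mul (hWm.sub aestronglyMeasurable_const)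
    · rw [Real.norm_eq_abs, Real.norm_eq_abs, abs_of_nonneg (sq_nonneg _), ← sq_abs,
        abs_of_nonneg (sq_nonneg ((2:ℝ) * δ))]
      exact pow_le_pow_left₀ (abs_nonneg _) (hWc ω) 2
  set Z : Ω → ℝ := fun ω => U ω + W ω with hZdef
  have hZ : Integrable Z ℙ := hU.add hW
  have hZ2 : Integrable (fun ω => Z ω ^ 2) ℙ := by
    have h : (fun ω => Z ω ^ 2)
        = fun ω => (U ω - μU) ^ 2 + 2 * ((U ω - μU) * (W ω - μW)) + (W ω - μW) ^ 2
          + (2 * (μU + μW)) * Z ω - (μU + μW) ^ 2 := by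
      funext ω; simp only [hZdef]; ring
    rw [h]
    exact (((hUc2.add (hprod.const_mul 2)).add hWc2).add (hZ.const_mul _)).sub
      (integrable_const _)
  have hμZ : ∫ ω, Z ω ∂ℙ = μU + μW := integral_add hU hW
  have hexp : (fun ω => (Z ω - ∫ ω', Z ω' ∂ℙ) ^ 2)
      = fun ω => (U ω - μU) ^ 2 + (2 * ((U ω - μU) * (W ω - μW)) + (W ω - μW) ^ 2) := by
    funext ω; rw [hμZ]; simp only [hZdef]; ring
  have h1 : (∫ ω, Z ω ^ 2 ∂ℙ) - (∫ ω, Z ω ∂ℙ) ^ 2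
      = (∫ ω, (U ω - μU) ^ 2 ∂ℙ)
        + (2 * (∫ ω, (U ω - μU) * (W ω - μW) ∂ℙ) + ∫ ω, (W ω - μW) ^ 2 ∂ℙ) := by
    have hbc : Integrable (fun ω => 2 * ((U ω - μU) * (W ω - μW)) + (W ω - μW) ^ 2) ℙ :=
      (hprod.const_mul 2).add hWc2
    rw [← varE hZ hZ2, hexp, integral_add hUc2 hbc,
      integral_add (hprod.const_mul 2) hWc2, integral_const_mul]
  have h2 : -(2 * δ) * (∫ ω, |U ω - μU| ∂ℙ) ≤ ∫ ω, (U ω - μU) * (W ω - μW) ∂ℙ := by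
    rw [← integral_const_mul]
    refine integral_mono (hUabs.const_mul (-(2 * δ))) hprod (fun ω => ?_)
    have := hprodb ω
    have := neg_abs_le ((U ω - μU) * (W ω - μW))
    linarith
  have h3 : 0 ≤ ∫ ω, (W ω - μW) ^ 2 ∂ℙ := integral_nonneg fun ω => sq_nonneg _
  have h4 : ∫ ω, (U ω - μU) ^ 2 ∂ℙ = (∫ ω, U ω ^ 2 ∂ℙ) - μU ^ 2 := varE hU hU2
  have h5 : (∫ ω, (U ω + W ω) ^ 2 ∂ℙ) = ∫ ω, Z ω ^ 2 ∂ℙ := rfl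
  have h6 : (∫ ω, (U ω + W ω) ∂ℙ) = ∫ ω, Z ω ∂ℙ := rfl
  rw [h5, h6, h1, h4]
  linarith [h2, h3]
lemma exists_min_of_coercive {n : ℕ} {g : EuclideanSpace ℝ (Fin n) → ℝ} (hg : Continuous g)
    {v₀ C₁ C₂ : ℝ} (hv : 0 < v₀)
    (hb : ∀ K, v₀ * ‖K‖ ^ 2 - C₁ * ‖K‖ - C₂ ≤ g K) : ∃ K₀, ∀ K, g K₀ ≤ g K := by
  obtain ⟨R, hR1, hvR⟩ : ∃ R : ℝ, 1 ≤ R ∧ |C₁| + |C₂| + |g 0| + 1 + v₀ ≤ v₀ * R := by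
    refine ⟨(|C₁| + |C₂| + |g 0| + 1 + v₀) / v₀ + 1, ?_, ?_⟩
    · have : 0 ≤ (|C₁| + |C₂| + |g 0| + 1 + v₀) / v₀ := div_nonneg (by positivity) hv.le
      linarith
    · rw [mul_add, mul_one, mul_div_cancel₀ _ (ne_of_gt hv)]
      linarith
  have hR0 : (0:ℝ) ≤ R := by linarith
  obtain ⟨K₀, hK₀mem, hmin⟩ :=
    (isCompact_closedBall (0 : EuclideanSpace ℝ (Fin n)) R).exists_isMinOn
      ⟨0, Metric.mem_closedBall_self hR0⟩ hg.continuousOn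
  refine ⟨K₀, fun K => ?_⟩
  by_cases hK : ‖K‖ ≤ R
  · exact isMinOn_iff.mp hmin K (by simpa [Metric.mem_closedBall, dist_zero_right] using hK)
  · push_neg at hK
    have h0 : g K₀ ≤ g 0 := isMinOn_iff.mp hmin 0 (Metric.mem_closedBall_self hR0)
    have hKR : R ≤ ‖K‖ := hK.le
    have h1 : (1:ℝ) ≤ ‖K‖ := hR1.trans hKR
    have f1 : v₀ * (R * ‖K‖) ≤ v₀ * (‖K‖ * ‖K‖) :=
      mul_le_mul_of_nonneg_left (mul_le_mul_of_nonneg_right hKR (norm_nonneg K)) hv.le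
    have f2 : (|C₁| + |C₂| + |g 0| + 1 + v₀) * ‖K‖ ≤ v₀ * R * ‖K‖ :=
      mul_le_mul_of_nonneg_right hvR (norm_nonneg K)
    have f3 : (|C₂| + |g 0| + 1 + v₀) * 1 ≤ (|C₂| + |g 0| + 1 + v₀) * ‖K‖ :=
      mul_le_mul_of_nonneg_left h1 (by positivity)
    have f4 : C₁ * ‖K‖ ≤ |C₁| * ‖K‖ :=
      mul_le_mul_of_nonneg_right (le_abs_self _) (by linarith)
    have e4 : g 0 ≤ |g 0| := le_abs_self _
    have e5 : C₂ ≤ |C₂| := le_abs_self _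
    have hsq : ‖K‖ ^ 2 = ‖K‖ * ‖K‖ := sq ‖K‖
    have key : g 0 ≤ v₀ * ‖K‖ ^ 2 - C₁ * ‖K‖ - C₂ := by
      rw [hsq]; nlinarith [f1, f2, f3, f4, e4, e5, hv.le]
    linarith [hb K, h0, key]
noncomputable def Gfun {Ω : Type*} [MeasurableSpace Ω] (ℙ : Measure Ω) {n : ℕ}
    (P : Ω → EuclideanSpace ℝ (Fin n)) (s c d γ wp wm : ℝ)
    (K : EuclideanSpace ℝ (Fin n)) : ℝ :=
  (∫ ω, (phiZ c d (s + inner ℝ (P ω) K)) ^ 2 ∂ℙ)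
    - (∫ ω, phiZ c d (s + inner ℝ (P ω) K) ∂ℙ) ^ 2
    + wp * (∫ ω, (max (s + inner ℝ (P ω) K) 0) ^ 2 ∂ℙ)
    + wm * (∫ ω, (min (s + inner ℝ (P ω) K) 0) ^ 2 ∂ℙ)
    + γ * (∫ ω, phiZ c d (s + inner ℝ (P ω) K) ∂ℙ)

set_option maxHeartbeats 1600000 in
lemma exists_min_Gfun {Ω : Type*} [MeasurableSpace Ω] (ℙ : Measure Ω) [IsProbabilityMeasure ℙ]
    {n : ℕ} (hn : 1 ≤ n) (P : Ω → EuclideanSpace ℝ (Fin n)) (hmeas : Measurable P)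
    (hL2 : Integrable (fun ω => ‖P ω‖ ^ 2) ℙ) (s : ℝ) (hs : 0 < s)
    (htwosided : ∀ L : EuclideanSpace ℝ (Fin n), L ≠ 0 →
      0 < ℙ {ω | 0 < (inner ℝ (P ω) L : ℝ)} ∧ 0 < ℙ {ω | (inner ℝ (P ω) L : ℝ) < 0})
    (hatomless : ∀ L : EuclideanSpace ℝ (Fin n), L ≠ 0 →
      ∀ c : ℝ, ℙ {ω | (inner ℝ (P ω) L : ℝ) = c} = 0)
    (c d γ wp wm : ℝ) (hwp : 0 ≤ wp) (hwm : 0 ≤ wm) (hcd : c ≠ 0 ∨ d ≠ 0) :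
    ∃ K₀, ∀ K, Gfun ℙ P s c d γ wp wm K₀ ≤ Gfun ℙ P s c d γ wp wm K := by
  set M := |c| + |d| with hM
  have hM0 : (0:ℝ) ≤ M := by positivity
  have iNorm : Integrable (fun ω => ‖P ω‖) ℙ :=
    integrable_of_bound hL2 hmeas.norm.aestronglyMeasurable 1
      (fun ω => by rw [abs_norm]; nlinarith [sq_nonneg (‖P ω‖ - 1)])
  set EP := ∫ ω, ‖P ω‖ ∂ℙ with hEP
  have hEP0 : 0 ≤ EP := integral_nonneg fun ω => norm_nonneg _
  have gcont : ∀ t : ℝ, Continuous (fun y => phiZ c d (t + y)) := fun t =>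
    (phiZ_continuous c d).comp (continuous_const.add continuous_id)
  have gb1 : ∀ t y : ℝ, |phiZ c d (t + y)| ≤ (M * (|t| + 1)) * (1 + y ^ 2) := by
    intro t y
    have h1 := phiZ_abs_le c d (t + y)
    have h2 : |t + y| ≤ |t| + |y| := abs_add_le t y
    have h3 : 2 * |y| ≤ 1 + y ^ 2 := by nlinarith [sq_nonneg (|y| - 1), sq_abs y]
    nlinarith [abs_nonneg y, abs_nonneg t, sq_nonneg y, hM0,
      mul_le_mul_of_nonneg_left h3 hM0,
      mul_nonneg (mul_nonneg hM0 (abs_nonneg t)) (sq_nonneg y)]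
  have gb2 : ∀ t y : ℝ, |(phiZ c d (t + y)) ^ 2| ≤ (2 * M ^ 2 * (t ^ 2 + 1)) * (1 + y ^ 2) := by
    intro t y
    have h1 := phiZ_abs_le c d (t + y)
    have h2 : (phiZ c d (t + y)) ^ 2 ≤ (M * |t + y|) ^ 2 := by
      rw [← sq_abs (phiZ c d (t + y))]
      exact pow_le_pow_left₀ (abs_nonneg _) h1 2
    rw [abs_of_nonneg (sq_nonneg _)]
    have h4 : (M * |t + y|) ^ 2 = M ^ 2 * (t + y) ^ 2 := by rw [mul_pow, sq_abs]
    nlinarith [sq_nonneg (t - y), sq_nonneg (t + y),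
      mul_nonneg (sq_nonneg M) (mul_nonneg (sq_nonneg t) (sq_nonneg y)),
      mul_nonneg (sq_nonneg M) (sq_nonneg (t - y))]
  have iPhi : ∀ (t : ℝ) (K : EuclideanSpace ℝ (Fin n)),
      Integrable (fun ω => phiZ c d (t + inner ℝ (P ω) K)) ℙ := fun t K =>
    integrable_comp hmeas hL2 (g := fun y => phiZ c d (t + y)) (gcont t).measurable (gb1 t) K
  have iPhi2 : ∀ (t : ℝ) (K : EuclideanSpace ℝ (Fin n)),
      Integrable (fun ω => (phiZ c d (t + inner ℝ (P ω) K)) ^ 2) ℙ := fun t K =>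
    integrable_comp hmeas hL2 (g := fun y => (phiZ c d (t + y)) ^ 2)
      ((gcont t).pow 2).measurable (gb2 t) K
  have iPhi0 : ∀ L : EuclideanSpace ℝ (Fin n),
      Integrable (fun ω => phiZ c d (inner ℝ (P ω) L : ℝ)) ℙ := fun L => by
    have := iPhi 0 L; simpa using this
  have iPhi02 : ∀ L : EuclideanSpace ℝ (Fin n),
      Integrable (fun ω => (phiZ c d (inner ℝ (P ω) L : ℝ)) ^ 2) ℙ := fun L => by
    have := iPhi2 0 L; simpa using this
  set v : EuclideanSpace ℝ (Fin n) → ℝ := fun L =>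
    (∫ ω, (phiZ c d (inner ℝ (P ω) L : ℝ)) ^ 2 ∂ℙ)
      - (∫ ω, phiZ c d (inner ℝ (P ω) L : ℝ) ∂ℙ) ^ 2 with hvdef
  have hvcont : Continuous v := by
    rw [hvdef]
    refine Continuous.sub ?_ (Continuous.pow ?_ 2)
    · exact cont_integral hmeas hL2 (g := fun y => (phiZ c d y) ^ 2)
        ((phiZ_continuous c d).pow 2) (C := 2 * M ^ 2 * ((0:ℝ) ^ 2 + 1))
        (fun y => by simpa using gb2 0 y)
    · exact cont_integral hmeas hL2 (g := fun y => phiZ c d y)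
        (phiZ_continuous c d) (C := M * (|(0:ℝ)| + 1)) (fun y => by simpa using gb1 0 y)
  have hvpos : ∀ L : EuclideanSpace ℝ (Fin n), ‖L‖ = 1 → 0 < v L := by
    intro L hL
    have hLne : L ≠ 0 := fun h => by rw [h, norm_zero] at hL; exact one_ne_zero hL.symm
    by_contra hnot
    push_neg at hnot
    set Z0 : Ω → ℝ := fun ω => phiZ c d (inner ℝ (P ω) L : ℝ) with hZ0def
    set μ := ∫ ω, Z0 ω ∂ℙ with hμ
    have hvar : ∫ ω, (Z0 ω - μ) ^ 2 ∂ℙ = v L := varE (iPhi0 L) (iPhi02 L)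
    have hzero : ∫ ω, (Z0 ω - μ) ^ 2 ∂ℙ = 0 :=
      le_antisymm (by rw [hvar]; exact hnot) (integral_nonneg fun ω => sq_nonneg _)
    have hint2 : Integrable (fun ω => (Z0 ω - μ) ^ 2) ℙ := by
      have h : (fun ω => (Z0 ω - μ) ^ 2) = fun ω => Z0 ω ^ 2 - 2 * μ * Z0 ω + μ ^ 2 := by
        funext ω; ring
      rw [h]; exact ((iPhi02 L).sub ((iPhi0 L).const_mul _)).add (integrable_const _)
    have hae : ∀ᵐ ω ∂ℙ, Z0 ω = μ := by
      have h := (integral_eq_zero_iff_of_nonneg (fun ω => sq_nonneg (Z0 ω - μ)) hint2).mp hzero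
      filter_upwards [h] with ω hω
      have : (Z0 ω - μ) ^ 2 = 0 := hω
      have := pow_eq_zero_iff (n := 2) (by norm_num) |>.mp this
      linarith
    have hZne : ℙ {ω | ¬ (Z0 ω = μ)} = 0 := ae_iff.mp hae
    rcases hcd with hc | hd
    · have hS : 0 < ℙ {ω | 0 < (inner ℝ (P ω) L : ℝ)} := (htwosided L hLne).1
      have hsub : {ω | 0 < (inner ℝ (P ω) L : ℝ)} ⊆
          {ω | ¬ (Z0 ω = μ)} ∪ {ω | (inner ℝ (P ω) L : ℝ) = μ / c} := by
        intro ω hω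
        by_cases hz : Z0 ω = μ
        · right
          have hx : (0:ℝ) ≤ inner ℝ (P ω) L := le_of_lt hω
          have hZeq : Z0 ω = c * (inner ℝ (P ω) L : ℝ) := by
            simp only [hZ0def, phiZ, max_eq_left hx, min_eq_right hx, mul_zero, add_zero]
          have hcx : (inner ℝ (P ω) L : ℝ) * c = μ := by rw [mul_comm, ← hZeq]; exact hz
          exact eq_div_of_mul_eq hc hcx
        · left; exact hz
      have hzero' : ℙ {ω | 0 < (inner ℝ (P ω) L : ℝ)} = 0 := by
        refine le_antisymm ?_ zero_le
        calc ℙ {ω | 0 < (inner ℝ (P ω) L : ℝ)}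
            ≤ ℙ ({ω | ¬ (Z0 ω = μ)} ∪ {ω | (inner ℝ (P ω) L : ℝ) = μ / c}) := measure_mono hsub
          _ ≤ ℙ {ω | ¬ (Z0 ω = μ)} + ℙ {ω | (inner ℝ (P ω) L : ℝ) = μ / c} := measure_union_le _ _
          _ = 0 := by rw [hZne, hatomless L hLne (μ / c), add_zero]
      rw [hzero'] at hS; exact lt_irrefl _ hS
    · have hS : 0 < ℙ {ω | (inner ℝ (P ω) L : ℝ) < 0} := (htwosided L hLne).2
      have hsub : {ω | (inner ℝ (P ω) L : ℝ) < 0} ⊆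
          {ω | ¬ (Z0 ω = μ)} ∪ {ω | (inner ℝ (P ω) L : ℝ) = μ / d} := by
        intro ω hω
        by_cases hz : Z0 ω = μ
        · right
          have hx : (inner ℝ (P ω) L : ℝ) ≤ 0 := le_of_lt hω
          have hZeq : Z0 ω = d * (inner ℝ (P ω) L : ℝ) := by
            simp only [hZ0def, phiZ, max_eq_right hx, min_eq_left hx, mul_zero, zero_add]
          have hcx : (inner ℝ (P ω) L : ℝ) * d = μ := by rw [mul_comm, ← hZeq]; exact hz
          exact eq_div_of_mul_eq hd hcx
        · left; exact hz
      have hzero' : ℙ {ω | (inner ℝ (P ω) L : ℝ) < 0} = 0 := by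
        refine le_antisymm ?_ zero_le
        calc ℙ {ω | (inner ℝ (P ω) L : ℝ) < 0}
            ≤ ℙ ({ω | ¬ (Z0 ω = μ)} ∪ {ω | (inner ℝ (P ω) L : ℝ) = μ / d}) := measure_mono hsub
          _ ≤ ℙ {ω | ¬ (Z0 ω = μ)} + ℙ {ω | (inner ℝ (P ω) L : ℝ) = μ / d} := measure_union_le _ _
          _ = 0 := by rw [hZne, hatomless L hLne (μ / d), add_zero]
      rw [hzero'] at hS; exact lt_irrefl _ hS
  haveI : Nonempty (Fin n) := ⟨⟨0, hn⟩⟩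
  haveI : Nontrivial (EuclideanSpace ℝ (Fin n)) := by
    refine nontrivial_of_ne (EuclideanSpace.single (⟨0, hn⟩ : Fin n) (1:ℝ)) 0 fun h => ?_
    have h1 : ‖EuclideanSpace.single (⟨0, hn⟩ : Fin n) (1:ℝ)‖ = 1 := by
      rw [EuclideanSpace.norm_single]; norm_num
    rw [h, norm_zero] at h1; exact one_ne_zero h1.symm
  obtain ⟨L₀, hL₀mem, hL₀min⟩ :=
    (isCompact_sphere (0 : EuclideanSpace ℝ (Fin n)) 1).exists_isMinOn
      (NormedSpace.sphere_nonempty.mpr zero_le_one) hvcont.continuousOn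
  have hv₀ : 0 < v L₀ := hvpos L₀ (mem_sphere_zero_iff_norm.mp hL₀mem)
  have hv₀le : ∀ L : EuclideanSpace ℝ (Fin n), ‖L‖ = 1 → v L₀ ≤ v L := fun L hL =>
    isMinOn_iff.mp hL₀min L (mem_sphere_zero_iff_norm.mpr hL)
  -- continuity of Gfun
  have hGcont : Continuous (Gfun ℙ P s c d γ wp wm) := by
    have c1 : Continuous fun K : EuclideanSpace ℝ (Fin n) =>
        ∫ ω, (phiZ c d (s + inner ℝ (P ω) K)) ^ 2 ∂ℙ :=
      cont_integral hmeas hL2 (g := fun y => (phiZ c d (s + y)) ^ 2) ((gcont s).pow 2) (gb2 s)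
    have c2 : Continuous fun K : EuclideanSpace ℝ (Fin n) =>
        ∫ ω, phiZ c d (s + inner ℝ (P ω) K) ∂ℙ :=
      cont_integral hmeas hL2 (g := fun y => phiZ c d (s + y)) (gcont s) (gb1 s)
    have gbmax : ∀ y : ℝ, |(max (s + y) 0) ^ 2| ≤ (2 * (s ^ 2 + 1)) * (1 + y ^ 2) := by
      intro y
      rw [abs_of_nonneg (sq_nonneg _)]
      have h1 : (max (s + y) 0) ^ 2 ≤ (s + y) ^ 2 := by
        rw [← sq_abs (max (s + y) 0), ← sq_abs (s + y)]
        exact pow_le_pow_left₀ (abs_nonneg _) (abs_max_le (s + y)) 2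
      nlinarith [sq_nonneg (s - y), sq_nonneg (s * y), sq_nonneg y, sq_nonneg s]
    have gbmin : ∀ y : ℝ, |(min (s + y) 0) ^ 2| ≤ (2 * (s ^ 2 + 1)) * (1 + y ^ 2) := by
      intro y
      rw [abs_of_nonneg (sq_nonneg _)]
      have h1 : (min (s + y) 0) ^ 2 ≤ (s + y) ^ 2 := by
        rw [← sq_abs (min (s + y) 0), ← sq_abs (s + y)]
        exact pow_le_pow_left₀ (abs_nonneg _) (abs_min_le (s + y)) 2
      nlinarith [sq_nonneg (s - y), sq_nonneg (s * y), sq_nonneg y, sq_nonneg s]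
    have c3 : Continuous fun K : EuclideanSpace ℝ (Fin n) =>
        ∫ ω, (max (s + inner ℝ (P ω) K) 0) ^ 2 ∂ℙ :=
      cont_integral hmeas hL2 (g := fun y => (max (s + y) 0) ^ 2)
        (((continuous_const.add continuous_id).max continuous_const).pow 2) gbmax
    have c4 : Continuous fun K : EuclideanSpace ℝ (Fin n) =>
        ∫ ω, (min (s + inner ℝ (P ω) K) 0) ^ 2 ∂ℙ :=
      cont_integral hmeas hL2 (g := fun y => (min (s + y) 0) ^ 2)
        (((continuous_const.add continuous_id).min continuous_const).pow 2) gbmin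
    exact ((((c1.sub (c2.pow 2)).add (continuous_const.mul c3)).add
      (continuous_const.mul c4)).add (continuous_const.mul c2))
  -- coercivity lower bound
  have hlb : ∀ K : EuclideanSpace ℝ (Fin n),
      v L₀ * ‖K‖ ^ 2 - (8 * M ^ 2 * s * EP + |γ| * M * EP) * ‖K‖ - |γ| * M * s
        ≤ Gfun ℙ P s c d γ wp wm K := by
    intro K
    set X : Ω → ℝ := fun ω => inner ℝ (P ω) K with hXdef
    set U : Ω → ℝ := fun ω => phiZ c d (X ω) with hUdef
    set Z : Ω → ℝ := fun ω => phiZ c d (s + X ω) with hZdef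
    have hU : Integrable U ℙ := by
      have h0 := iPhi 0 K
      simp only [zero_add] at h0
      exact h0
    have hU2 : Integrable (fun ω => U ω ^ 2) ℙ := by
      have h0 := iPhi2 0 K
      simp only [zero_add] at h0
      exact h0
    have hZint : Integrable Z ℙ := iPhi s K
    have hZ2int : Integrable (fun ω => Z ω ^ 2) ℙ := iPhi2 s K
    have hUm : AEStronglyMeasurable U ℙ := hU.aestronglyMeasurable
    have hWm : AEStronglyMeasurable (fun ω => Z ω - U ω) ℙ :=
      hZint.aestronglyMeasurable.sub hUm
    have hWb : ∀ ω, |Z ω - U ω| ≤ M * s := by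
      intro ω
      have h := phiZ_lip c d (s + X ω) (X ω)
      rw [add_sub_cancel_right, abs_of_pos hs] at h
      exact h
    have hvl := var_lower (ℙ := ℙ) (U := U) (W := fun ω => Z ω - U ω)
      (mul_nonneg hM0 hs.le) hUm hWm hU hU2 hWb
    have heq1 : ∫ ω, (U ω + (Z ω - U ω)) ^ 2 ∂ℙ = ∫ ω, Z ω ^ 2 ∂ℙ := by
      congr 1; funext ω; ring_nf
    have heq2 : ∫ ω, (U ω + (Z ω - U ω)) ∂ℙ = ∫ ω, Z ω ∂ℙ := by
      congr 1; funext ω; ring_nf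
    rw [heq1, heq2] at hvl
    set μU := ∫ ω, U ω ∂ℙ with hμU
    have habsU : ∀ ω, |U ω| ≤ M * ‖K‖ * ‖P ω‖ := by
      intro ω
      have h1 := phiZ_abs_le c d (X ω)
      have h2 : |X ω| ≤ ‖P ω‖ * ‖K‖ := abs_real_inner_le_norm _ _
      nlinarith [hM0, norm_nonneg (P ω), norm_nonneg K, abs_nonneg (X ω)]
    have hiU : ∫ ω, |U ω| ∂ℙ ≤ M * ‖K‖ * EP := by
      calc ∫ ω, |U ω| ∂ℙ ≤ ∫ ω, (M * ‖K‖) * ‖P ω‖ ∂ℙ :=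
            integral_mono hU.abs (iNorm.const_mul _) (fun ω => by
              have := habsU ω; linarith [this])
        _ = M * ‖K‖ * EP := by rw [integral_const_mul]
    have hμUb : |μU| ≤ ∫ ω, |U ω| ∂ℙ := by
      rw [hμU, ← Real.norm_eq_abs]
      refine (norm_integral_le_integral_norm _).trans ?_
      simp [Real.norm_eq_abs]
    have hdev : ∫ ω, |U ω - μU| ∂ℙ ≤ 2 * (M * ‖K‖ * EP) := by
      have hd1 : ∫ ω, |U ω - μU| ∂ℙ ≤ ∫ ω, (|U ω| + |μU|) ∂ℙ :=
        integral_mono (hU.sub (integrable_const _)).abs (hU.abs.add (integrable_const _))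
          (fun ω => abs_sub _ _)
      rw [integral_add hU.abs (integrable_const _), integral_const] at hd1
      simp only [measure_univ, probReal_univ, ENNReal.toReal_one, one_smul, smul_eq_mul] at hd1
      linarith [hiU, hμUb]
    -- variance of Z lower bound
    have hVarZ : v L₀ * ‖K‖ ^ 2 - 8 * M ^ 2 * s * EP * ‖K‖
        ≤ (∫ ω, Z ω ^ 2 ∂ℙ) - (∫ ω, Z ω ∂ℙ) ^ 2 := by
      by_cases hK0 : K = 0
      · have hnK : ‖K‖ = 0 := by rw [hK0, norm_zero]
        rw [hnK]
        have hvn := var_nonneg hZint hZ2int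
        have h0 : v L₀ * (0:ℝ) ^ 2 - 8 * M ^ 2 * s * EP * 0 = 0 := by ring
        rw [h0]
        exact hvn
      · have hnK : 0 < ‖K‖ := norm_pos_iff.mpr hK0
        set L : EuclideanSpace ℝ (Fin n) := ‖K‖⁻¹ • K with hLdef
        have hLnorm : ‖L‖ = 1 := norm_smul_inv_norm hK0
        have hXL : ∀ ω, X ω = ‖K‖ * (inner ℝ (P ω) L : ℝ) := by
          intro ω
          rw [hLdef, real_inner_smul_right, mul_inv_cancel_left₀ (ne_of_gt hnK)]
        have hUL : ∀ ω, U ω = ‖K‖ * phiZ c d (inner ℝ (P ω) L : ℝ) := by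
          intro ω
          rw [hUdef]
          simp only
          rw [hXL ω, phiZ_smul c d (norm_nonneg K)]
        have hIU : ∫ ω, U ω ∂ℙ = ‖K‖ * ∫ ω, phiZ c d (inner ℝ (P ω) L : ℝ) ∂ℙ := by
          rw [show (fun ω => U ω) = fun ω => ‖K‖ * phiZ c d (inner ℝ (P ω) L : ℝ) from
            funext hUL, integral_const_mul]
        have hIU2 : ∫ ω, U ω ^ 2 ∂ℙ
            = ‖K‖ ^ 2 * ∫ ω, (phiZ c d (inner ℝ (P ω) L : ℝ)) ^ 2 ∂ℙ := by
          rw [show (fun ω => U ω ^ 2)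
              = fun ω => ‖K‖ ^ 2 * (phiZ c d (inner ℝ (P ω) L : ℝ)) ^ 2 from
            funext fun ω => by rw [hUL ω]; ring, integral_const_mul]
        have hVarU : (∫ ω, U ω ^ 2 ∂ℙ) - (∫ ω, U ω ∂ℙ) ^ 2 = ‖K‖ ^ 2 * v L := by
          rw [hIU, hIU2, hvdef]
          dsimp only
          ring
        have hvLge : v L₀ ≤ v L := hv₀le L hLnorm
        have hKv : ‖K‖ ^ 2 * v L₀ ≤ ‖K‖ ^ 2 * v L :=
          mul_le_mul_of_nonneg_left hvLge (sq_nonneg _)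
        have hdev4 : 4 * (M * s) * (∫ ω, |U ω - μU| ∂ℙ) ≤ 4 * (M * s) * (2 * (M * ‖K‖ * EP)) :=
          mul_le_mul_of_nonneg_left hdev (by positivity)
        rw [hVarU] at hvl
        nlinarith [hvl, hKv, hdev4]
    -- bound on |∫ Z|
    have hZb : ∀ ω, |Z ω| ≤ M * s + (M * ‖K‖) * ‖P ω‖ := by
      intro ω
      have h1 : |Z ω| ≤ M * |s + X ω| := by
        rw [hM]; exact phiZ_abs_le c d (s + X ω)
      have h2 : |s + X ω| ≤ s + |X ω| := by
        have := abs_add_le s (X ω); rw [abs_of_pos hs] at this; exact this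
      have h3 : |X ω| ≤ ‖P ω‖ * ‖K‖ := abs_real_inner_le_norm _ _
      nlinarith [hM0, norm_nonneg (P ω), norm_nonneg K]
    have hIZb : |∫ ω, Z ω ∂ℙ| ≤ M * s + M * ‖K‖ * EP := by
      rw [← Real.norm_eq_abs]
      refine (norm_integral_le_integral_norm _).trans ?_
      have : ∫ ω, ‖Z ω‖ ∂ℙ ≤ ∫ ω, (M * s + (M * ‖K‖) * ‖P ω‖) ∂ℙ := by
        refine integral_mono hZint.norm ((integrable_const _).add (iNorm.const_mul _))
          (fun ω => ?_)
        rw [Real.norm_eq_abs]; exact hZb ω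
      rw [integral_add (integrable_const _) (iNorm.const_mul _), integral_const,
        integral_const_mul] at this
      simp only [measure_univ, probReal_univ, ENNReal.toReal_one, one_smul, smul_eq_mul] at this
      linarith [this]
    have hγZ : -( |γ| * (M * s + M * ‖K‖ * EP)) ≤ γ * ∫ ω, Z ω ∂ℙ := by
      have h1 : |γ * ∫ ω, Z ω ∂ℙ| ≤ |γ| * (M * s + M * ‖K‖ * EP) := by
        rw [abs_mul]
        exact mul_le_mul_of_nonneg_left hIZb (abs_nonneg γ)
      linarith [neg_abs_le (γ * ∫ ω, Z ω ∂ℙ)]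
    have hq1 : 0 ≤ wp * ∫ ω, (max (s + inner ℝ (P ω) K) 0) ^ 2 ∂ℙ :=
      mul_nonneg hwp (integral_nonneg fun ω => sq_nonneg _)
    have hq2 : 0 ≤ wm * ∫ ω, (min (s + inner ℝ (P ω) K) 0) ^ 2 ∂ℙ :=
      mul_nonneg hwm (integral_nonneg fun ω => sq_nonneg _)
    have hGeq : Gfun ℙ P s c d γ wp wm K
        = ((∫ ω, Z ω ^ 2 ∂ℙ) - (∫ ω, Z ω ∂ℙ) ^ 2)
          + wp * (∫ ω, (max (s + inner ℝ (P ω) K) 0) ^ 2 ∂ℙ)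
          + wm * (∫ ω, (min (s + inner ℝ (P ω) K) 0) ^ 2 ∂ℙ)
          + γ * (∫ ω, Z ω ∂ℙ) := rfl
    rw [hGeq]
    nlinarith [hVarZ, hγZ, hq1, hq2]
  exact exists_min_of_coercive hGcont hv₀ hlb
set_option maxHeartbeats 1600000 in
lemma basic_integrals {Ω : Type*} [MeasurableSpace Ω] (ℙ : Measure Ω) [IsProbabilityMeasure ℙ]
    {n : ℕ} (P : Ω → EuclideanSpace ℝ (Fin n)) (hmeas : Measurable P)
    (hL2 : Integrable (fun ω => ‖P ω‖ ^ 2) ℙ) (s : ℝ) (K : EuclideanSpace ℝ (Fin n)) :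
    Integrable (fun ω => max (s + inner ℝ (P ω) K) 0) ℙ ∧
    Integrable (fun ω => min (s + inner ℝ (P ω) K) 0) ℙ ∧
    Integrable (fun ω => (max (s + inner ℝ (P ω) K) 0) ^ 2) ℙ ∧
    Integrable (fun ω => (min (s + inner ℝ (P ω) K) 0) ^ 2) ℙ ∧
    Integrable (fun ω => (inner ℝ (P ω) K : ℝ)) ℙ ∧
    Integrable (fun ω => (inner ℝ (P ω) K : ℝ) ^ 2) ℙ := by
  have cmax : Continuous fun y : ℝ => max (s + y) 0 :=
    (continuous_const.add continuous_id).max continuous_const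
  have cmin : Continuous fun y : ℝ => min (s + y) 0 :=
    (continuous_const.add continuous_id).min continuous_const
  have bmax : ∀ y : ℝ, |max (s + y) 0| ≤ (|s| + 1) * (1 + y ^ 2) := by
    intro y
    have h1 := abs_max_le (s + y)
    have h2 := abs_add_le s y
    nlinarith [sq_nonneg (|y| - 1), sq_abs y, abs_nonneg y, abs_nonneg s,
      mul_nonneg (abs_nonneg s) (sq_nonneg y)]
  have bmin : ∀ y : ℝ, |min (s + y) 0| ≤ (|s| + 1) * (1 + y ^ 2) := by
    intro y
    have h1 := abs_min_le (s + y)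
    have h2 := abs_add_le s y
    nlinarith [sq_nonneg (|y| - 1), sq_abs y, abs_nonneg y, abs_nonneg s,
      mul_nonneg (abs_nonneg s) (sq_nonneg y)]
  have bmax2 : ∀ y : ℝ, |(max (s + y) 0) ^ 2| ≤ (2 * (s ^ 2 + 1)) * (1 + y ^ 2) := by
    intro y
    rw [abs_of_nonneg (sq_nonneg _)]
    have h1 : (max (s + y) 0) ^ 2 ≤ (s + y) ^ 2 := by
      rw [← sq_abs (max (s + y) 0), ← sq_abs (s + y)]
      exact pow_le_pow_left₀ (abs_nonneg _) (abs_max_le (s + y)) 2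
    nlinarith [sq_nonneg (s - y), sq_nonneg (s * y), sq_nonneg y, sq_nonneg s]
  have bmin2 : ∀ y : ℝ, |(min (s + y) 0) ^ 2| ≤ (2 * (s ^ 2 + 1)) * (1 + y ^ 2) := by
    intro y
    rw [abs_of_nonneg (sq_nonneg _)]
    have h1 : (min (s + y) 0) ^ 2 ≤ (s + y) ^ 2 := by
      rw [← sq_abs (min (s + y) 0), ← sq_abs (s + y)]
      exact pow_le_pow_left₀ (abs_nonneg _) (abs_min_le (s + y)) 2
    nlinarith [sq_nonneg (s - y), sq_nonneg (s * y), sq_nonneg y, sq_nonneg s]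
  have bid : ∀ y : ℝ, |y| ≤ 1 * (1 + y ^ 2) := fun y => by
    nlinarith [sq_nonneg (|y| - 1), sq_abs y]
  have bsq : ∀ y : ℝ, |y ^ 2| ≤ 1 * (1 + y ^ 2) := fun y => by
    rw [abs_of_nonneg (sq_nonneg y)]; nlinarith
  exact ⟨integrable_comp hmeas hL2 (g := fun y => max (s + y) 0) cmax.measurable bmax K,
    integrable_comp hmeas hL2 (g := fun y => min (s + y) 0) cmin.measurable bmin K,
    integrable_comp hmeas hL2 (g := fun y => (max (s + y) 0) ^ 2) (cmax.pow 2).measurable bmax2 K,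
    integrable_comp hmeas hL2 (g := fun y => (min (s + y) 0) ^ 2) (cmin.pow 2).measurable bmin2 K,
    integrable_comp hmeas hL2 (g := fun y => y) continuous_id.measurable bid K,
    integrable_comp hmeas hL2 (g := fun y => y ^ 2) (continuous_id.pow 2).measurable bsq K⟩

set_option maxHeartbeats 1600000 in
lemma core_identities {Ω : Type*} [MeasurableSpace Ω] (ℙ : Measure Ω) [IsProbabilityMeasure ℙ]
    {n : ℕ} (P : Ω → EuclideanSpace ℝ (Fin n)) (hmeas : Measurable P)
    (hL2 : Integrable (fun ω => ‖P ω‖ ^ 2) ℙ) (s : ℝ) (K : EuclideanSpace ℝ (Fin n)) :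
    ((∫ ω, (inner ℝ (P ω) K : ℝ) ∂ℙ)
        = (∫ ω, max (s + inner ℝ (P ω) K) 0 ∂ℙ) + (∫ ω, min (s + inner ℝ (P ω) K) 0 ∂ℙ) - s) ∧
    ((∫ ω, (inner ℝ (P ω) K : ℝ) ^ 2 ∂ℙ)
        = (∫ ω, (max (s + inner ℝ (P ω) K) 0) ^ 2 ∂ℙ) + (∫ ω, (min (s + inner ℝ (P ω) K) 0) ^ 2 ∂ℙ)
          - 2 * s * ((∫ ω, max (s + inner ℝ (P ω) K) 0 ∂ℙ)
            + (∫ ω, min (s + inner ℝ (P ω) K) 0 ∂ℙ) - s) - s ^ 2) ∧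
    (∀ c d : ℝ, (∫ ω, phiZ c d (s + inner ℝ (P ω) K) ∂ℙ)
        = c * (∫ ω, max (s + inner ℝ (P ω) K) 0 ∂ℙ) + d * (∫ ω, min (s + inner ℝ (P ω) K) 0 ∂ℙ)) ∧
    (∀ c d : ℝ, (∫ ω, (phiZ c d (s + inner ℝ (P ω) K)) ^ 2 ∂ℙ)
        = c ^ 2 * (∫ ω, (max (s + inner ℝ (P ω) K) 0) ^ 2 ∂ℙ)
          + d ^ 2 * (∫ ω, (min (s + inner ℝ (P ω) K) 0) ^ 2 ∂ℙ)) := by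
  obtain ⟨iMax, iMin, iMax2, iMin2, iX, iX2⟩ := basic_integrals ℙ P hmeas hL2 s K
  have hr1 : ∫ ω, (s + inner ℝ (P ω) K : ℝ) ∂ℙ = s + ∫ ω, (inner ℝ (P ω) K : ℝ) ∂ℙ := by
    rw [integral_add (integrable_const s) iX, integral_const]
    simp only [measure_univ, probReal_univ, ENNReal.toReal_one, one_smul, smul_eq_mul]
    ring
  have hr1' : ∫ ω, (s + inner ℝ (P ω) K : ℝ) ∂ℙ
      = (∫ ω, max (s + inner ℝ (P ω) K) 0 ∂ℙ) + ∫ ω, min (s + inner ℝ (P ω) K) 0 ∂ℙ := by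
    rw [← integral_add iMax iMin]
    congr 1; funext ω
    rw [max_add_min, add_zero]
  have hr2 : ∫ ω, (s + inner ℝ (P ω) K : ℝ) ^ 2 ∂ℙ
      = s ^ 2 + 2 * s * (∫ ω, (inner ℝ (P ω) K : ℝ) ∂ℙ) + ∫ ω, (inner ℝ (P ω) K : ℝ) ^ 2 ∂ℙ := by
    have hpt : (fun ω => (s + inner ℝ (P ω) K : ℝ) ^ 2)
        = fun ω => s ^ 2 + (2 * s * (inner ℝ (P ω) K : ℝ) + (inner ℝ (P ω) K : ℝ) ^ 2) := by
      funext ω; ring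
    have ha : Integrable (fun ω => 2 * s * (inner ℝ (P ω) K : ℝ) + (inner ℝ (P ω) K : ℝ) ^ 2) ℙ :=
      (iX.const_mul (2 * s)).add iX2
    rw [hpt, integral_add (integrable_const _) ha,
      integral_add (iX.const_mul (2 * s)) iX2, integral_const_mul, integral_const]
    simp only [measure_univ, probReal_univ, ENNReal.toReal_one, one_smul, smul_eq_mul]
    ring
  have hr2' : ∫ ω, (s + inner ℝ (P ω) K : ℝ) ^ 2 ∂ℙ
      = (∫ ω, (max (s + inner ℝ (P ω) K) 0) ^ 2 ∂ℙ)
        + ∫ ω, (min (s + inner ℝ (P ω) K) 0) ^ 2 ∂ℙ := by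
    rw [← integral_add iMax2 iMin2]
    congr 1; funext ω
    have h1 := max_add_min (s + inner ℝ (P ω) K : ℝ) 0
    have h0 := max_mul_min (s + inner ℝ (P ω) K : ℝ)
    linear_combination (-(max (s + inner ℝ (P ω) K : ℝ) 0 + min (s + inner ℝ (P ω) K : ℝ) 0
      + (s + inner ℝ (P ω) K : ℝ))) * h1 + 2 * h0
  have he1 : (∫ ω, (inner ℝ (P ω) K : ℝ) ∂ℙ)
      = (∫ ω, max (s + inner ℝ (P ω) K) 0 ∂ℙ) + (∫ ω, min (s + inner ℝ (P ω) K) 0 ∂ℙ) - s := by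
    linarith [hr1, hr1']
  refine ⟨he1, by linear_combination hr2' - hr2 - 2 * s * he1, ?_, ?_⟩
  · intro c d
    calc ∫ ω, phiZ c d (s + inner ℝ (P ω) K) ∂ℙ
        = ∫ ω, (c * max (s + inner ℝ (P ω) K) 0 + d * min (s + inner ℝ (P ω) K) 0) ∂ℙ := rfl
      _ = c * (∫ ω, max (s + inner ℝ (P ω) K) 0 ∂ℙ)
          + d * (∫ ω, min (s + inner ℝ (P ω) K) 0 ∂ℙ) := by
          rw [integral_add (iMax.const_mul c) (iMin.const_mul d), integral_const_mul,
            integral_const_mul]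
  · intro c d
    have hpt : (fun ω => (phiZ c d (s + inner ℝ (P ω) K)) ^ 2)
        = fun ω => c ^ 2 * (max (s + inner ℝ (P ω) K) 0) ^ 2
          + d ^ 2 * (min (s + inner ℝ (P ω) K) 0) ^ 2 := by
      funext ω
      have h0 := max_mul_min (s + inner ℝ (P ω) K : ℝ)
      show (c * max (s + inner ℝ (P ω) K) 0 + d * min (s + inner ℝ (P ω) K) 0) ^ 2 = _
      linear_combination (2 * c * d) * h0
    rw [hpt, integral_add (iMax2.const_mul _) (iMin2.const_mul _), integral_const_mul,
      integral_const_mul]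
set_option maxHeartbeats 1600000 in
lemma Fplus_eq_Gfun {Ω : Type*} [MeasurableSpace Ω] (ℙ : Measure Ω) [IsProbabilityMeasure ℙ]
    {n : ℕ} (P : Ω → EuclideanSpace ℝ (Fin n)) (hmeas : Measurable P)
    (hL2 : Integrable (fun ω => ‖P ω‖ ^ 2) ℙ) (s ρ' γp ap am bp bm : ℝ)
    (K : EuclideanSpace ℝ (Fin n)) :
    Fplus ℙ P s ρ' γp ap am bp bm K
      = Gfun ℙ P s (ρ' + ap) (ρ' + am) (-γp) (bp - ap ^ 2) (bm - am ^ 2) K := by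
  obtain ⟨he1, he2, hz1, hz2⟩ := core_identities ℙ P hmeas hL2 s K
  have hc1 : (∫ ω, ap * (s + inner ℝ (P ω) K) * (if 0 ≤ s + inner ℝ (P ω) K then (1:ℝ) else 0) ∂ℙ)
      = ap * ∫ ω, max (s + inner ℝ (P ω) K) 0 ∂ℙ := by
    rw [← integral_const_mul]
    congr 1; funext ω
    by_cases h : (0:ℝ) ≤ s + inner ℝ (P ω) K
    · rw [if_pos h, max_eq_left h]; ring
    · rw [if_neg h, max_eq_right (le_of_not_ge h)]; ring
  have hc2 : (∫ ω, am * (s + inner ℝ (P ω) K) * (if s + inner ℝ (P ω) K < 0 then (1:ℝ) else 0) ∂ℙ)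
      = am * ∫ ω, min (s + inner ℝ (P ω) K) 0 ∂ℙ := by
    rw [← integral_const_mul]
    congr 1; funext ω
    by_cases h : (s + inner ℝ (P ω) K : ℝ) < 0
    · rw [if_pos h, min_eq_left h.le]; ring
    · rw [if_neg h, min_eq_right (le_of_not_gt h)]; ring
  have hc3 : (∫ ω, (2 * ρ' * ap + bp) * (s + inner ℝ (P ω) K) ^ 2
        * (if 0 ≤ s + inner ℝ (P ω) K then (1:ℝ) else 0) ∂ℙ)
      = (2 * ρ' * ap + bp) * ∫ ω, (max (s + inner ℝ (P ω) K) 0) ^ 2 ∂ℙ := by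
    rw [← integral_const_mul]
    congr 1; funext ω
    by_cases h : (0:ℝ) ≤ s + inner ℝ (P ω) K
    · rw [if_pos h, max_eq_left h]; ring
    · rw [if_neg h, max_eq_right (le_of_not_ge h)]; ring
  have hc4 : (∫ ω, (2 * ρ' * am + bm) * (s + inner ℝ (P ω) K) ^ 2
        * (if s + inner ℝ (P ω) K < 0 then (1:ℝ) else 0) ∂ℙ)
      = (2 * ρ' * am + bm) * ∫ ω, (min (s + inner ℝ (P ω) K) 0) ^ 2 ∂ℙ := by
    rw [← integral_const_mul]
    congr 1; funext ω
    by_cases h : (s + inner ℝ (P ω) K : ℝ) < 0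
    · rw [if_pos h, min_eq_left h.le]; ring
    · rw [if_neg h, min_eq_right (le_of_not_gt h)]; ring
  simp only [Fplus, Gfun]
  rw [hc1, hc2, hc3, hc4, hz1 (ρ' + ap) (ρ' + am), hz2 (ρ' + ap) (ρ' + am), he1, he2]
  ring

set_option maxHeartbeats 1600000 in
lemma Fminus_eq_Gfun {Ω : Type*} [MeasurableSpace Ω] (ℙ : Measure Ω) [IsProbabilityMeasure ℙ]
    {n : ℕ} (P : Ω → EuclideanSpace ℝ (Fin n)) (hmeas : Measurable P)
    (hL2 : Integrable (fun ω => ‖P ω‖ ^ 2) ℙ) (s ρ' γm ap am bp bm : ℝ)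
    (K : EuclideanSpace ℝ (Fin n)) :
    Fminus ℙ P s ρ' γm ap am bp bm K
      = Gfun ℙ P s (ρ' + am) (ρ' + ap) γm (bm - am ^ 2) (bp - ap ^ 2) K := by
  obtain ⟨he1, he2, hz1, hz2⟩ := core_identities ℙ P hmeas hL2 s K
  have hc1 : (∫ ω, ap * (s + inner ℝ (P ω) K) * (if s + inner ℝ (P ω) K ≤ 0 then (1:ℝ) else 0) ∂ℙ)
      = ap * ∫ ω, min (s + inner ℝ (P ω) K) 0 ∂ℙ := by
    rw [← integral_const_mul]
    congr 1; funext ω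
    by_cases h : (s + inner ℝ (P ω) K : ℝ) ≤ 0
    · rw [if_pos h, min_eq_left h]; ring
    · rw [if_neg h, min_eq_right (le_of_not_ge h)]; ring
  have hc2 : (∫ ω, am * (s + inner ℝ (P ω) K) * (if 0 < s + inner ℝ (P ω) K then (1:ℝ) else 0) ∂ℙ)
      = am * ∫ ω, max (s + inner ℝ (P ω) K) 0 ∂ℙ := by
    rw [← integral_const_mul]
    congr 1; funext ω
    by_cases h : (0:ℝ) < s + inner ℝ (P ω) K
    · rw [if_pos h, max_eq_left h.le]; ring
    · rw [if_neg h, max_eq_right (le_of_not_gt h)]; ring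
  have hc3 : (∫ ω, (2 * ρ' * ap + bp) * (s + inner ℝ (P ω) K) ^ 2
        * (if s + inner ℝ (P ω) K ≤ 0 then (1:ℝ) else 0) ∂ℙ)
      = (2 * ρ' * ap + bp) * ∫ ω, (min (s + inner ℝ (P ω) K) 0) ^ 2 ∂ℙ := by
    rw [← integral_const_mul]
    congr 1; funext ω
    by_cases h : (s + inner ℝ (P ω) K : ℝ) ≤ 0
    · rw [if_pos h, min_eq_left h]; ring
    · rw [if_neg h, min_eq_right (le_of_not_ge h)]; ring
  have hc4 : (∫ ω, (2 * ρ' * am + bm) * (s + inner ℝ (P ω) K) ^ 2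
        * (if 0 < s + inner ℝ (P ω) K then (1:ℝ) else 0) ∂ℙ)
      = (2 * ρ' * am + bm) * ∫ ω, (max (s + inner ℝ (P ω) K) 0) ^ 2 ∂ℙ := by
    rw [← integral_const_mul]
    congr 1; funext ω
    by_cases h : (0:ℝ) < s + inner ℝ (P ω) K
    · rw [if_pos h, max_eq_left h.le]; ring
    · rw [if_neg h, max_eq_right (le_of_not_gt h)]; ring
  simp only [Fminus, Gfun]
  rw [hc1, hc2, hc3, hc4, hz1 (ρ' + am) (ρ' + ap), hz2 (ρ' + am) (ρ' + ap), he1, he2]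
  ring

end FFmin

/-- Under two-sidedness, directional atomlessness, `b⁺ ≥ (a⁺)²`, `b⁻ ≥ (a⁻)²`
and `(ρ'+a⁺, ρ'+a⁻) ≠ (0,0)`, both `F⁺` and `F⁻` attain a global minimum on `ℝⁿ`. -/
theorem Fplus_Fminus_attain_min {Ω : Type*} [MeasurableSpace Ω] (ℙ : Measure Ω)
    [IsProbabilityMeasure ℙ] {n : ℕ} (hn : 1 ≤ n)
    (P : Ω → EuclideanSpace ℝ (Fin n)) (hmeas : Measurable P)
    (hL2 : Integrable (fun ω => ‖P ω‖ ^ 2) ℙ)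
    (s ρ' γp γm ap am bp bm : ℝ) (hs : 0 < s) (hρ : 0 < ρ')
    (htwosided : ∀ L : EuclideanSpace ℝ (Fin n), L ≠ 0 →
      0 < ℙ {ω | 0 < (inner ℝ (P ω) L : ℝ)} ∧ 0 < ℙ {ω | (inner ℝ (P ω) L : ℝ) < 0})
    (hatomless : ∀ L : EuclideanSpace ℝ (Fin n), L ≠ 0 →
      ∀ c : ℝ, ℙ {ω | (inner ℝ (P ω) L : ℝ) = c} = 0)
    (hbp : ap ^ 2 ≤ bp) (hbm : am ^ 2 ≤ bm)
    (hne : (ρ' + ap, ρ' + am) ≠ ((0 : ℝ), (0 : ℝ))) :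
    (∃ Kp : EuclideanSpace ℝ (Fin n), ∀ K : EuclideanSpace ℝ (Fin n),
        Fplus ℙ P s ρ' γp ap am bp bm Kp ≤ Fplus ℙ P s ρ' γp ap am bp bm K) ∧
    (∃ Km : EuclideanSpace ℝ (Fin n), ∀ K : EuclideanSpace ℝ (Fin n),
        Fminus ℙ P s ρ' γm ap am bp bm Km ≤ Fminus ℙ P s ρ' γm ap am bp bm K) := by
  have hcdp : (ρ' + ap) ≠ 0 ∨ (ρ' + am) ≠ 0 := by
    by_contra hcon
    push_neg at hcon
    exact hne (by simp [hcon.1, hcon.2])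
  constructor
  · obtain ⟨Kp, h⟩ := FFmin.exists_min_Gfun ℙ hn P hmeas hL2 s hs htwosided hatomless
      (ρ' + ap) (ρ' + am) (-γp) (bp - ap ^ 2) (bm - am ^ 2)
      (by linarith) (by linarith) hcdp
    refine ⟨Kp, fun K => ?_⟩
    rw [FFmin.Fplus_eq_Gfun ℙ P hmeas hL2 s ρ' γp ap am bp bm Kp,
      FFmin.Fplus_eq_Gfun ℙ P hmeas hL2 s ρ' γp ap am bp bm K]
    exact h K
  · obtain ⟨Km, h⟩ := FFmin.exists_min_Gfun ℙ hn P hmeas hL2 s hs htwosided hatomless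
      (ρ' + am) (ρ' + ap) γm (bm - am ^ 2) (bp - ap ^ 2)
      (by linarith) (by linarith) hcdp.symm
    refine ⟨Km, fun K => ?_⟩
    rw [FFmin.Fminus_eq_Gfun ℙ P hmeas hL2 s ρ' γm ap am bp bm Km,
      FFmin.Fminus_eq_Gfun ℙ P hmeas hL2 s ρ' γm ap am bp bm K]
    exact h K
end

section
/- If P is directionally atomless, then F⁺ and F⁻ are continuous functions on ℝⁿ. -/
open MeasureTheory

section Aux

open Filter Set

lemma indCont_ge (x₀ : ℝ) (hx : x₀ ≠ 0) :
    ContinuousAt (fun x : ℝ => if 0 ≤ x then (1:ℝ) else 0) x₀ := by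
  rcases hx.lt_or_gt with h | h
  · refine Filter.EventuallyEq.continuousAt (y := (0:ℝ)) ?_
    filter_upwards [Iio_mem_nhds h] with y hy
    simp only [Set.mem_Iio] at hy
    simp [not_le.2 hy]
  · refine Filter.EventuallyEq.continuousAt (y := (1:ℝ)) ?_
    filter_upwards [Ioi_mem_nhds h] with y hy
    simp only [Set.mem_Ioi] at hy
    simp [hy.le]

lemma indCont_lt (x₀ : ℝ) (hx : x₀ ≠ 0) :
    ContinuousAt (fun x : ℝ => if x < 0 then (1:ℝ) else 0) x₀ := by
  rcases hx.lt_or_gt with h | h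
  · refine Filter.EventuallyEq.continuousAt (y := (1:ℝ)) ?_
    filter_upwards [Iio_mem_nhds h] with y hy
    simp only [Set.mem_Iio] at hy
    simp [hy]
  · refine Filter.EventuallyEq.continuousAt (y := (0:ℝ)) ?_
    filter_upwards [Ioi_mem_nhds h] with y hy
    simp only [Set.mem_Ioi] at hy
    simp [not_lt.2 hy.le]

lemma indCont_le (x₀ : ℝ) (hx : x₀ ≠ 0) :
    ContinuousAt (fun x : ℝ => if x ≤ 0 then (1:ℝ) else 0) x₀ := by
  rcases hx.lt_or_gt with h | h
  · refine Filter.EventuallyEq.continuousAt (y := (1:ℝ)) ?_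
    filter_upwards [Iio_mem_nhds h] with y hy
    simp only [Set.mem_Iio] at hy
    simp [hy.le]
  · refine Filter.EventuallyEq.continuousAt (y := (0:ℝ)) ?_
    filter_upwards [Ioi_mem_nhds h] with y hy
    simp only [Set.mem_Ioi] at hy
    simp [not_le.2 hy]

lemma indCont_gt (x₀ : ℝ) (hx : x₀ ≠ 0) :
    ContinuousAt (fun x : ℝ => if 0 < x then (1:ℝ) else 0) x₀ := by
  rcases hx.lt_or_gt with h | h
  · refine Filter.EventuallyEq.continuousAt (y := (0:ℝ)) ?_
    filter_upwards [Iio_mem_nhds h] with y hy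
    simp only [Set.mem_Iio] at hy
    simp [not_lt.2 hy.le]
  · refine Filter.EventuallyEq.continuousAt (y := (1:ℝ)) ?_
    filter_upwards [Ioi_mem_nhds h] with y hy
    simp only [Set.mem_Ioi] at hy
    simp [hy]

lemma bound_lin (c i x : ℝ) (hi : |i| ≤ 1) : |c * x * i| ≤ |c| * (1 + |x|) ^ 2 := by
  rw [abs_mul, abs_mul]
  have h1 : |c| * |x| * |i| ≤ |c| * |x| * 1 :=
    mul_le_mul_of_nonneg_left hi (mul_nonneg (abs_nonneg c) (abs_nonneg x))
  nlinarith [abs_nonneg c, abs_nonneg x, mul_nonneg (abs_nonneg c) (abs_nonneg x),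
    mul_nonneg (abs_nonneg c) (mul_nonneg (abs_nonneg x) (abs_nonneg x))]

lemma bound_quad (c i x : ℝ) (hi : |i| ≤ 1) : |c * x ^ 2 * i| ≤ |c| * (1 + |x|) ^ 2 := by
  rw [abs_mul, abs_mul, abs_pow, sq_abs]
  have h1 : |c| * x ^ 2 * |i| ≤ |c| * x ^ 2 * 1 :=
    mul_le_mul_of_nonneg_left hi (mul_nonneg (abs_nonneg c) (sq_nonneg x))
  nlinarith [abs_nonneg c, abs_nonneg x, sq_abs x,
    mul_nonneg (abs_nonneg c) (abs_nonneg x), mul_nonneg (abs_nonneg c) (sq_nonneg x)]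

lemma master {Ω : Type*} [MeasurableSpace Ω] (ℙ : Measure Ω)
    [IsProbabilityMeasure ℙ] {n : ℕ}
    (P : Ω → EuclideanSpace ℝ (Fin n)) (hmeas : Measurable P)
    (hL2 : Integrable (fun ω => ‖P ω‖ ^ 2) ℙ) (s : ℝ) (hs : 0 < s)
    (hatomless : ∀ L : EuclideanSpace ℝ (Fin n), L ≠ 0 →
      ∀ c : ℝ, ℙ {ω | (inner ℝ (P ω) L : ℝ) = c} = 0)
    (h : ℝ → ℝ) (hm : Measurable h)
    (hc : ∀ x : ℝ, x ≠ 0 → ContinuousAt h x)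
    (C : ℝ) (hb : ∀ x, |h x| ≤ C * (1 + |x|) ^ 2) :
    Continuous fun K : EuclideanSpace ℝ (Fin n) =>
      ∫ ω, h (s + (inner ℝ (P ω) K : ℝ)) ∂ℙ := by
  have hPnorm : Integrable (fun ω => ‖P ω‖) ℙ := by
    refine ((integrable_const (1:ℝ)).add hL2).mono' hmeas.norm.aestronglyMeasurable ?_
    filter_upwards with ω
    simp only [Pi.add_apply]
    rw [Real.norm_eq_abs, abs_of_nonneg (norm_nonneg _)]
    nlinarith [norm_nonneg (P ω), sq_nonneg (1 - ‖P ω‖)]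
  have hC : 0 ≤ C := by
    have h0 := hb 0
    simp only [abs_zero, add_zero, one_pow, mul_one] at h0
    linarith [abs_nonneg (h 0)]
  rw [continuous_iff_continuousAt]
  intro K₀
  set R : ℝ := ‖K₀‖ + 1 with hR
  have hR0 : 0 ≤ R := by positivity
  apply MeasureTheory.continuousAt_of_dominated
    (bound := fun ω => C * (1 + s + ‖P ω‖ * R) ^ 2)
  · filter_upwards with K
    exact (hm.comp (measurable_const.add (hmeas.inner measurable_const))).aestronglyMeasurable
  · filter_upwards [Metric.ball_mem_nhds K₀ one_pos] with K hK
    filter_upwards with ω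
    have hKn : ‖K‖ ≤ R := by
      have h1 : ‖K - K₀‖ < 1 := by rwa [mem_ball_iff_norm] at hK
      have h2 : ‖K‖ ≤ ‖K₀‖ + ‖K - K₀‖ := by
        have := norm_add_le K₀ (K - K₀); simpa using this
      rw [hR]; linarith
    have hin : |(inner ℝ (P ω) K : ℝ)| ≤ ‖P ω‖ * R := by
      calc |(inner ℝ (P ω) K : ℝ)| ≤ ‖P ω‖ * ‖K‖ := abs_real_inner_le_norm _ _
        _ ≤ ‖P ω‖ * R := mul_le_mul_of_nonneg_left hKn (norm_nonneg _)
    have habs : |s + (inner ℝ (P ω) K : ℝ)| ≤ s + ‖P ω‖ * R := by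
      calc |s + (inner ℝ (P ω) K : ℝ)| ≤ |s| + |(inner ℝ (P ω) K : ℝ)| := abs_add_le _ _
        _ ≤ s + ‖P ω‖ * R := by rw [abs_of_pos hs]; linarith
    rw [Real.norm_eq_abs]
    calc |h (s + (inner ℝ (P ω) K : ℝ))| ≤ C * (1 + |s + (inner ℝ (P ω) K : ℝ)|) ^ 2 := hb _
      _ ≤ C * (1 + s + ‖P ω‖ * R) ^ 2 := by
          refine mul_le_mul_of_nonneg_left (pow_le_pow_left₀ (by positivity) (by linarith) 2) hC
  · have heq : (fun ω => C * (1 + s + ‖P ω‖ * R) ^ 2) =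
        fun ω => C * (1 + s) ^ 2 + (2 * C * (1 + s) * R) * ‖P ω‖ + (C * R ^ 2) * ‖P ω‖ ^ 2 := by
      funext ω; ring
    rw [heq]
    exact ((integrable_const _).add (hPnorm.const_mul _)).add (hL2.const_mul _)
  · by_cases hK₀ : K₀ = 0
    · subst hK₀
      filter_upwards with ω
      have hne : s + (inner ℝ (P ω) (0 : EuclideanSpace ℝ (Fin n)) : ℝ) ≠ 0 := by
        simp [hs.ne']
      have hg : Continuous fun K : EuclideanSpace ℝ (Fin n) => s + (inner ℝ (P ω) K : ℝ) :=
        continuous_const.add (Continuous.inner continuous_const continuous_id)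
      exact ContinuousAt.comp (f := fun K : EuclideanSpace ℝ (Fin n) => s + (inner ℝ (P ω) K : ℝ)) (hc _ hne) hg.continuousAt
    · have h0 : ∀ᵐ ω ∂ℙ, (inner ℝ (P ω) K₀ : ℝ) ≠ -s := by
        have := hatomless K₀ hK₀ (-s)
        rw [MeasureTheory.ae_iff]
        simpa using this
      filter_upwards [h0] with ω hω
      have hne : s + (inner ℝ (P ω) K₀ : ℝ) ≠ 0 := fun hz => hω (by linarith)
      have hg : Continuous fun K : EuclideanSpace ℝ (Fin n) => s + (inner ℝ (P ω) K : ℝ) :=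
        continuous_const.add (Continuous.inner continuous_const continuous_id)
      exact ContinuousAt.comp (f := fun K : EuclideanSpace ℝ (Fin n) => s + (inner ℝ (P ω) K : ℝ)) (hc _ hne) hg.continuousAt

end Aux

/-- If `P` is directionally atomless (and square integrable), then `F⁺` and `F⁻`
are continuous functions on `ℝⁿ`. -/
theorem Fplus_Fminus_continuous {Ω : Type*} [MeasurableSpace Ω] (ℙ : Measure Ω)
    [IsProbabilityMeasure ℙ] {n : ℕ} (hn : 1 ≤ n)
    (P : Ω → EuclideanSpace ℝ (Fin n)) (hmeas : Measurable P)
    (hL2 : Integrable (fun ω => ‖P ω‖ ^ 2) ℙ)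
    (s ρ' γp γm ap am bp bm : ℝ) (hs : 0 < s) (hρ : 0 < ρ')
    (hatomless : ∀ L : EuclideanSpace ℝ (Fin n), L ≠ 0 →
      ∀ c : ℝ, ℙ {ω | (inner ℝ (P ω) L : ℝ) = c} = 0) :
    Continuous (Fplus ℙ P s ρ' γp ap am bp bm) ∧
    Continuous (Fminus ℙ P s ρ' γm ap am bp bm) := by
  have habs_ge : ∀ x : ℝ, |(if 0 ≤ x then (1:ℝ) else 0)| ≤ 1 := by
    intro x; split <;> norm_num
  have habs_lt : ∀ x : ℝ, |(if x < 0 then (1:ℝ) else 0)| ≤ 1 := by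
    intro x; split <;> norm_num
  have habs_le : ∀ x : ℝ, |(if x ≤ 0 then (1:ℝ) else 0)| ≤ 1 := by
    intro x; split <;> norm_num
  have habs_gt : ∀ x : ℝ, |(if 0 < x then (1:ℝ) else 0)| ≤ 1 := by
    intro x; split <;> norm_num
  have mset_ge : MeasurableSet {x : ℝ | 0 ≤ x} := measurableSet_le measurable_const measurable_id
  have mset_lt : MeasurableSet {x : ℝ | x < 0} := measurableSet_lt measurable_id measurable_const
  have mset_le : MeasurableSet {x : ℝ | x ≤ 0} := measurableSet_le measurable_id measurable_const
  have mset_gt : MeasurableSet {x : ℝ | 0 < x} := measurableSet_lt measurable_const measurable_id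
  -- continuity of the mean
  have hm : Continuous fun K : EuclideanSpace ℝ (Fin n) => ∫ ω, (inner ℝ (P ω) K : ℝ) ∂ℙ := by
    have := master ℙ P hmeas hL2 s hs hatomless (fun x => x - s)
      (measurable_id.sub measurable_const)
      (fun x _ => continuousAt_id.sub continuousAt_const)
      (1 + s)
      (by intro x
          have h1 : |x - s| ≤ |x| + |s| := abs_sub _ _
          rw [abs_of_pos hs] at h1
          nlinarith [abs_nonneg x, hs.le, sq_nonneg (|x|)])
    simpa using this
  -- continuity of the second moment
  have hq : Continuous fun K : EuclideanSpace ℝ (Fin n) => ∫ ω, (inner ℝ (P ω) K : ℝ) ^ 2 ∂ℙ := by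
    have := master ℙ P hmeas hL2 s hs hatomless (fun x => (x - s) ^ 2)
      ((measurable_id.sub measurable_const).pow_const 2)
      (fun x _ => (continuousAt_id.sub continuousAt_const).pow 2)
      ((1 + s) ^ 2)
      (by intro x
          have h1 : |x - s| ≤ |x| + s := by
            have := abs_sub x s; rw [abs_of_pos hs] at this; linarith
          have h2 : (x - s) ^ 2 ≤ (|x| + s) ^ 2 := by
            have := sq_abs (x - s)
            nlinarith [abs_nonneg (x - s), abs_nonneg x]
          have h3 : |x| + s ≤ (1 + s) * (1 + |x|) := by
            nlinarith [abs_nonneg x, hs.le, mul_nonneg hs.le (abs_nonneg x)]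
          have h4 : (|x| + s) ^ 2 ≤ ((1 + s) * (1 + |x|)) ^ 2 :=
            pow_le_pow_left₀ (by positivity) h3 2
          rw [abs_of_nonneg (sq_nonneg _)]
          calc (x - s) ^ 2 ≤ (|x| + s) ^ 2 := h2
            _ ≤ ((1 + s) * (1 + |x|)) ^ 2 := h4
            _ = (1 + s) ^ 2 * (1 + |x|) ^ 2 := by ring)
    simpa using this
  -- the eight indicator integrals
  have hlin : ∀ (c : ℝ) (cond : ℝ → Prop) (inst : DecidablePred cond),
      MeasurableSet {x : ℝ | cond x} →
      (∀ x : ℝ, |(if cond x then (1:ℝ) else 0)| ≤ 1) →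
      (∀ x : ℝ, x ≠ 0 → ContinuousAt (fun x : ℝ => if cond x then (1:ℝ) else 0) x) →
      Continuous fun K : EuclideanSpace ℝ (Fin n) =>
        ∫ ω, c * (s + (inner ℝ (P ω) K : ℝ)) *
          (if cond (s + (inner ℝ (P ω) K : ℝ)) then (1:ℝ) else 0) ∂ℙ := by
    intro c cond inst hset hb hcont
    exact master ℙ P hmeas hL2 s hs hatomless
      (fun x => c * x * (if cond x then (1:ℝ) else 0))
      ((measurable_const.mul measurable_id).mul
        (Measurable.ite hset measurable_const measurable_const))
      (fun x hx => (continuousAt_const.mul continuousAt_id).mul (hcont x hx))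
      |c| (fun x => bound_lin c _ x (hb x))
  have hquad : ∀ (c : ℝ) (cond : ℝ → Prop) (inst : DecidablePred cond),
      MeasurableSet {x : ℝ | cond x} →
      (∀ x : ℝ, |(if cond x then (1:ℝ) else 0)| ≤ 1) →
      (∀ x : ℝ, x ≠ 0 → ContinuousAt (fun x : ℝ => if cond x then (1:ℝ) else 0) x) →
      Continuous fun K : EuclideanSpace ℝ (Fin n) =>
        ∫ ω, c * (s + (inner ℝ (P ω) K : ℝ)) ^ 2 *
          (if cond (s + (inner ℝ (P ω) K : ℝ)) then (1:ℝ) else 0) ∂ℙ := by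
    intro c cond inst hset hb hcont
    exact master ℙ P hmeas hL2 s hs hatomless
      (fun x => c * x ^ 2 * (if cond x then (1:ℝ) else 0))
      ((measurable_const.mul (measurable_id.pow_const 2)).mul
        (Measurable.ite hset measurable_const measurable_const))
      (fun x hx => (continuousAt_const.mul (continuousAt_id.pow 2)).mul (hcont x hx))
      |c| (fun x => bound_quad c _ x (hb x))
  have hA1p := hlin ap (fun x => 0 ≤ x) _ mset_ge habs_ge indCont_ge
  have hA2p := hlin am (fun x => x < 0) _ mset_lt habs_lt indCont_lt
  have hQ1p := hquad (2 * ρ' * ap + bp) (fun x => 0 ≤ x) _ mset_ge habs_ge indCont_ge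
  have hQ2p := hquad (2 * ρ' * am + bm) (fun x => x < 0) _ mset_lt habs_lt indCont_lt
  have hA1m := hlin ap (fun x => x ≤ 0) _ mset_le habs_le indCont_le
  have hA2m := hlin am (fun x => 0 < x) _ mset_gt habs_gt indCont_gt
  have hQ1m := hquad (2 * ρ' * ap + bp) (fun x => x ≤ 0) _ mset_le habs_le indCont_le
  have hQ2m := hquad (2 * ρ' * am + bm) (fun x => 0 < x) _ mset_gt habs_gt indCont_gt
  have hAp := hA1p.add hA2p
  have hAm := hA1m.add hA2m
  have hsm : Continuous fun K : EuclideanSpace ℝ (Fin n) =>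
      s + ∫ ω, (inner ℝ (P ω) K : ℝ) ∂ℙ := continuous_const.add hm
  constructor
  · exact ((((((continuous_const.mul (hq.sub (hm.pow 2))).add hQ1p).add hQ2p).sub
      (hAp.pow 2)).sub ((continuous_const.mul hAp).mul hsm)).sub
      (continuous_const.mul hAp)).sub (continuous_const.mul hsm)
  · exact ((((((continuous_const.mul (hq.sub (hm.pow 2))).add hQ1m).add hQ2m).sub
      (hAm.pow 2)).sub ((continuous_const.mul hAm).mul hsm)).add
      (continuous_const.mul hAm)).add (continuous_const.mul hsm)
end

section
/- For every Y > 0 and K ∈ ℝⁿ, taking u = K·Y (so Y' = (s+P'K)·Y), the random variables m and q are integrable and E[q] − (E[m])² − γ⁺Y·E[m] = Y²·F⁺(K). -/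
open MeasureTheory

/-- The random variable `m = ρ'Y' + a⁺Y'·1{Y' ≥ 0} + a⁻Y'·1{Y' < 0}`,
where `Y' = sY + P'u`. -/
noncomputable def mRV {Ω : Type*} {n : ℕ} (P : Ω → EuclideanSpace ℝ (Fin n))
    (s ρ' ap am : ℝ) (Y : ℝ) (u : EuclideanSpace ℝ (Fin n)) (ω : Ω) : ℝ :=
  let Y' : ℝ := s * Y + inner ℝ (P ω) u
  ρ' * Y' + ap * Y' * (if 0 ≤ Y' then (1:ℝ) else 0) +
    am * Y' * (if Y' < 0 then (1:ℝ) else 0)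

/-- The random variable `q = ρ'²Y'² + (2ρ'a⁺+b⁺)Y'²·1{Y' ≥ 0} + (2ρ'a⁻+b⁻)Y'²·1{Y' < 0}`,
where `Y' = sY + P'u`. -/
noncomputable def qRV {Ω : Type*} {n : ℕ} (P : Ω → EuclideanSpace ℝ (Fin n))
    (s ρ' ap am bp bm : ℝ) (Y : ℝ) (u : EuclideanSpace ℝ (Fin n)) (ω : Ω) : ℝ :=
  let Y' : ℝ := s * Y + inner ℝ (P ω) u
  ρ' ^ 2 * Y' ^ 2 + (2 * ρ' * ap + bp) * Y' ^ 2 * (if 0 ≤ Y' then (1:ℝ) else 0) +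
    (2 * ρ' * am + bm) * Y' ^ 2 * (if Y' < 0 then (1:ℝ) else 0)

/-- For `Y > 0` and `u = K·Y` (so `Y' = (s+P'K)·Y`), the random variables `m` and `q`
are integrable and `E[q] − (E[m])² − γ⁺Y·E[m] = Y²·F⁺(K)`. -/
theorem cost_functional_eq_Fplus {Ω : Type*} [MeasurableSpace Ω] (ℙ : Measure Ω)
    [IsProbabilityMeasure ℙ] {n : ℕ} (hn : 1 ≤ n)
    (P : Ω → EuclideanSpace ℝ (Fin n)) (hmeas : Measurable P)
    (hL2 : Integrable (fun ω => ‖P ω‖ ^ 2) ℙ)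
    (s ρ' γp ap am bp bm : ℝ) (hs : 0 < s) (hρ : 0 < ρ') :
    ∀ Y : ℝ, 0 < Y → ∀ K : EuclideanSpace ℝ (Fin n),
      Integrable (fun ω => mRV P s ρ' ap am Y (Y • K) ω) ℙ ∧
      Integrable (fun ω => qRV P s ρ' ap am bp bm Y (Y • K) ω) ℙ ∧
      (∫ ω, qRV P s ρ' ap am bp bm Y (Y • K) ω ∂ℙ) -
        (∫ ω, mRV P s ρ' ap am Y (Y • K) ω ∂ℙ) ^ 2 -
        γp * Y * (∫ ω, mRV P s ρ' ap am Y (Y • K) ω ∂ℙ) =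
      Y ^ 2 * Fplus ℙ P s ρ' γp ap am bp bm K := by
  intro Y hY K
  have hpkm : Measurable fun ω => (inner ℝ (P ω) K : ℝ) := hmeas.inner measurable_const
  have hPn : Integrable (fun ω => ‖P ω‖) ℙ := by
    refine ((integrable_const (1:ℝ)).add hL2).mono hmeas.norm.aestronglyMeasurable ?_
    filter_upwards with ω
    have h0 : (0:ℝ) ≤ ‖P ω‖ := norm_nonneg _
    have h1 : ‖P ω‖ ≤ 1 + ‖P ω‖^2 := by nlinarith
    have h2 : (0:ℝ) ≤ 1 + ‖P ω‖^2 := by positivity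
    simpa [Real.norm_eq_abs, abs_of_nonneg h0, abs_of_nonneg h2] using h1
  have hpkInt : Integrable (fun ω => (inner ℝ (P ω) K : ℝ)) ℙ := by
    refine (hPn.const_mul ‖K‖).mono hpkm.aestronglyMeasurable ?_
    filter_upwards with ω
    have h := abs_real_inner_le_norm (P ω) K
    have h0 : (0:ℝ) ≤ ‖K‖ * ‖P ω‖ := by positivity
    simp only [Real.norm_eq_abs]
    rw [abs_of_nonneg h0]
    nlinarith [abs_nonneg (inner ℝ (P ω) K : ℝ)]
  have hpk2 : Integrable (fun ω => (inner ℝ (P ω) K : ℝ) ^ 2) ℙ := by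
    refine (hL2.const_mul (‖K‖^2)).mono (hpkm.pow_const 2).aestronglyMeasurable ?_
    filter_upwards with ω
    have h := abs_real_inner_le_norm (P ω) K
    have h0 : (0:ℝ) ≤ ‖K‖^2 * ‖P ω‖^2 := by positivity
    simp only [Real.norm_eq_abs]
    rw [abs_of_nonneg h0, abs_of_nonneg (sq_nonneg _)]
    nlinarith [abs_nonneg (inner ℝ (P ω) K : ℝ), sq_abs (inner ℝ (P ω) K : ℝ),
      norm_nonneg (P ω), norm_nonneg K]
  have htInt : Integrable (fun ω => s + (inner ℝ (P ω) K : ℝ)) ℙ := (integrable_const s).add hpkInt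
  have htm : Measurable fun ω => s + (inner ℝ (P ω) K : ℝ) := measurable_const.add hpkm
  have ht2eq : (fun ω => (s + (inner ℝ (P ω) K : ℝ))^2)
      = fun ω => s^2 + 2*s*(inner ℝ (P ω) K : ℝ) + (inner ℝ (P ω) K : ℝ)^2 := by
    funext ω; ring
  have ht2Int : Integrable (fun ω => (s + (inner ℝ (P ω) K : ℝ))^2) ℙ := by
    rw [ht2eq]
    exact ((integrable_const _).add (hpkInt.const_mul _)).add hpk2
  have hχpm : Measurable fun ω => (if 0 ≤ s + (inner ℝ (P ω) K : ℝ) then (1:ℝ) else 0) :=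
    Measurable.ite (measurableSet_le measurable_const htm) measurable_const measurable_const
  have hχmm : Measurable fun ω => (if s + (inner ℝ (P ω) K : ℝ) < 0 then (1:ℝ) else 0) :=
    Measurable.ite (measurableSet_lt htm measurable_const) measurable_const measurable_const
  have key : ∀ (f χ : Ω → ℝ), Integrable f ℙ → Measurable χ → (∀ ω, ‖χ ω‖ ≤ 1) →
      Integrable (fun ω => f ω * χ ω) ℙ := by
    intro f χ hf hχ hb
    have := hf.bdd_mul (c := 1) hχ.aestronglyMeasurable (Filter.Eventually.of_forall hb)
    simpa [mul_comm] using this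
  have hbp : ∀ ω, ‖(if 0 ≤ s + (inner ℝ (P ω) K : ℝ) then (1:ℝ) else 0)‖ ≤ 1 := by
    intro ω; split <;> simp
  have hbm : ∀ ω, ‖(if s + (inner ℝ (P ω) K : ℝ) < 0 then (1:ℝ) else 0)‖ ≤ 1 := by
    intro ω; split <;> simp
  -- integrability of the pieces of m / Y
  have hgA : Integrable (fun ω => ρ' * (s + (inner ℝ (P ω) K : ℝ))) ℙ := htInt.const_mul _
  have hgB : Integrable (fun ω => ap * (s + (inner ℝ (P ω) K : ℝ)) *
      (if 0 ≤ s + (inner ℝ (P ω) K : ℝ) then (1:ℝ) else 0)) ℙ :=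
    key _ _ (htInt.const_mul ap) hχpm hbp
  have hgC : Integrable (fun ω => am * (s + (inner ℝ (P ω) K : ℝ)) *
      (if s + (inner ℝ (P ω) K : ℝ) < 0 then (1:ℝ) else 0)) ℙ :=
    key _ _ (htInt.const_mul am) hχmm hbm
  have hg : Integrable (fun ω => ρ' * (s + (inner ℝ (P ω) K : ℝ))
      + ap * (s + (inner ℝ (P ω) K : ℝ)) * (if 0 ≤ s + (inner ℝ (P ω) K : ℝ) then (1:ℝ) else 0)
      + am * (s + (inner ℝ (P ω) K : ℝ)) * (if s + (inner ℝ (P ω) K : ℝ) < 0 then (1:ℝ) else 0)) ℙ :=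
    (hgA.add hgB).add hgC
  -- integrability of the pieces of q / Y^2
  have hhA : Integrable (fun ω => ρ'^2 * (s + (inner ℝ (P ω) K : ℝ))^2) ℙ := ht2Int.const_mul _
  have hhB : Integrable (fun ω => (2*ρ'*ap+bp) * (s + (inner ℝ (P ω) K : ℝ))^2 *
      (if 0 ≤ s + (inner ℝ (P ω) K : ℝ) then (1:ℝ) else 0)) ℙ :=
    key _ _ (ht2Int.const_mul _) hχpm hbp
  have hhC : Integrable (fun ω => (2*ρ'*am+bm) * (s + (inner ℝ (P ω) K : ℝ))^2 *
      (if s + (inner ℝ (P ω) K : ℝ) < 0 then (1:ℝ) else 0)) ℙ :=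
    key _ _ (ht2Int.const_mul _) hχmm hbm
  have hh : Integrable (fun ω => ρ'^2 * (s + (inner ℝ (P ω) K : ℝ))^2
      + (2*ρ'*ap+bp) * (s + (inner ℝ (P ω) K : ℝ))^2 *
        (if 0 ≤ s + (inner ℝ (P ω) K : ℝ) then (1:ℝ) else 0)
      + (2*ρ'*am+bm) * (s + (inner ℝ (P ω) K : ℝ))^2 *
        (if s + (inner ℝ (P ω) K : ℝ) < 0 then (1:ℝ) else 0)) ℙ :=
    (hhA.add hhB).add hhC
  -- pointwise identities
  have hmfun : (fun ω => mRV P s ρ' ap am Y (Y • K) ω)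
      = fun ω => Y * (ρ' * (s + (inner ℝ (P ω) K : ℝ))
        + ap * (s + (inner ℝ (P ω) K : ℝ)) * (if 0 ≤ s + (inner ℝ (P ω) K : ℝ) then (1:ℝ) else 0)
        + am * (s + (inner ℝ (P ω) K : ℝ)) * (if s + (inner ℝ (P ω) K : ℝ) < 0 then (1:ℝ) else 0)) := by
    funext ω
    simp only [mRV, real_inner_smul_right]
    have h1 : s * Y + Y * (inner ℝ (P ω) K : ℝ) = Y * (s + (inner ℝ (P ω) K : ℝ)) := by ring
    rw [h1]
    have h2 : (0 ≤ Y * (s + (inner ℝ (P ω) K : ℝ))) ↔ (0 ≤ s + (inner ℝ (P ω) K : ℝ)) := by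
      constructor <;> intro h <;> nlinarith
    have h3 : (Y * (s + (inner ℝ (P ω) K : ℝ)) < 0) ↔ (s + (inner ℝ (P ω) K : ℝ) < 0) := by
      constructor <;> intro h <;> nlinarith
    rw [if_congr h2 rfl rfl, if_congr h3 rfl rfl]
    ring
  have hqfun : (fun ω => qRV P s ρ' ap am bp bm Y (Y • K) ω)
      = fun ω => Y^2 * (ρ'^2 * (s + (inner ℝ (P ω) K : ℝ))^2
        + (2*ρ'*ap+bp) * (s + (inner ℝ (P ω) K : ℝ))^2 *
          (if 0 ≤ s + (inner ℝ (P ω) K : ℝ) then (1:ℝ) else 0)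
        + (2*ρ'*am+bm) * (s + (inner ℝ (P ω) K : ℝ))^2 *
          (if s + (inner ℝ (P ω) K : ℝ) < 0 then (1:ℝ) else 0)) := by
    funext ω
    simp only [qRV, real_inner_smul_right]
    have h1 : s * Y + Y * (inner ℝ (P ω) K : ℝ) = Y * (s + (inner ℝ (P ω) K : ℝ)) := by ring
    rw [h1]
    have h2 : (0 ≤ Y * (s + (inner ℝ (P ω) K : ℝ))) ↔ (0 ≤ s + (inner ℝ (P ω) K : ℝ)) := by
      constructor <;> intro h <;> nlinarith
    have h3 : (Y * (s + (inner ℝ (P ω) K : ℝ)) < 0) ↔ (s + (inner ℝ (P ω) K : ℝ) < 0) := by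
      constructor <;> intro h <;> nlinarith
    rw [if_congr h2 rfl rfl, if_congr h3 rfl rfl]
    ring
  have hmInt : Integrable (fun ω => mRV P s ρ' ap am Y (Y • K) ω) ℙ := by
    rw [hmfun]; exact hg.const_mul Y
  have hqInt : Integrable (fun ω => qRV P s ρ' ap am bp bm Y (Y • K) ω) ℙ := by
    rw [hqfun]; exact hh.const_mul (Y^2)
  refine ⟨hmInt, hqInt, ?_⟩
  have hIt : ∫ ω, (s + (inner ℝ (P ω) K : ℝ)) ∂ℙ = s + ∫ ω, (inner ℝ (P ω) K : ℝ) ∂ℙ := by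
    rw [integral_add (integrable_const s) hpkInt, integral_const]
    simp
  have h12 : Integrable (fun ω => s^2 + 2*s*(inner ℝ (P ω) K : ℝ)) ℙ :=
    (integrable_const (s^2)).add (hpkInt.const_mul (2*s))
  have hgAB : Integrable (fun ω => ρ' * (s + (inner ℝ (P ω) K : ℝ))
      + ap * (s + (inner ℝ (P ω) K : ℝ)) * (if 0 ≤ s + (inner ℝ (P ω) K : ℝ) then (1:ℝ) else 0)) ℙ :=
    hgA.add hgB
  have hhAB : Integrable (fun ω => ρ'^2 * (s + (inner ℝ (P ω) K : ℝ))^2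
      + (2*ρ'*ap+bp) * (s + (inner ℝ (P ω) K : ℝ))^2 *
        (if 0 ≤ s + (inner ℝ (P ω) K : ℝ) then (1:ℝ) else 0)) ℙ :=
    hhA.add hhB
  have hIt2 : ∫ ω, (s + (inner ℝ (P ω) K : ℝ))^2 ∂ℙ
      = s^2 + 2*s*(∫ ω, (inner ℝ (P ω) K : ℝ) ∂ℙ) + ∫ ω, (inner ℝ (P ω) K : ℝ)^2 ∂ℙ := by
    rw [ht2eq, integral_add h12 hpk2,
      integral_add (integrable_const (s^2)) (hpkInt.const_mul (2*s)), integral_const,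
      integral_const_mul]
    simp
  rw [hmfun, hqfun, integral_const_mul, integral_const_mul,
    integral_add hgAB hgC, integral_add hgA hgB,
    integral_add hhAB hhC, integral_add hhA hhB,
    integral_const_mul, integral_const_mul, hIt, hIt2]
  simp only [Fplus]
  ring
end

section
/- Let P : Ω → ℝⁿ be a random vector with E[‖P‖²] < ∞ whose covariance matrix Σ = E[PP'] − E[P]E[P'] is positive definite. Fix s > 0, W ∈ ℝ, γ⁺ ≥ 0, γ⁻ ≥ 0 and X ∈ ℝ, and define the behavioral risk aversion γ(X) = γ⁺·(X − s⁻¹W) if X ≥ s⁻¹W and γ(X) = −γ⁻·(X − s⁻¹W) if X < s⁻¹W. Then the function u ↦ Var(sX + P'u) − γ(X)·E[sX + P'u] on ℝⁿ has a unique global minimizer u* = (γ(X)/2)·Σ⁻¹E[P]; equivalently, u* = K⁺·(X − s⁻¹W)·1{X ≥ s⁻¹W} + K⁻·(X − s⁻¹W)·1{X < s⁻¹W}, where K⁺ = (γ⁺/2)·Σ⁻¹E[P] and K⁻ = −(γ⁻/2)·Σ⁻¹E[P]; in particular the optimal policy is a piecewise linear feedback of X with reference point at the discounted investment target s⁻¹W.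 -/
open MeasureTheory

/-- One-period mean-variance portfolio selection with behavioral risk aversion
`γ(X) = γ⁺(X − s⁻¹W)` if `X ≥ s⁻¹W` and `γ(X) = −γ⁻(X − s⁻¹W)` if `X < s⁻¹W`:
the function `u ↦ Var(sX + P'u) − γ(X)·E[sX + P'u]` has the unique global minimizer
`u* = (γ(X)/2)·Σ⁻¹E[P]`, which equals the piecewise linear feedback policy
`K⁺·(X − s⁻¹W)·1{X ≥ s⁻¹W} + K⁻·(X − s⁻¹W)·1{X < s⁻¹W}` with
`K⁺ = (γ⁺/2)·Σ⁻¹E[P]` and `K⁻ = −(γ⁻/2)·Σ⁻¹E[P]`. -/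
theorem one_period_behavioral_mean_variance {Ω : Type*} [MeasurableSpace Ω]
    (ℙ : Measure Ω) [IsProbabilityMeasure ℙ] {n : ℕ} (hn : 1 ≤ n)
    (P : Ω → EuclideanSpace ℝ (Fin n)) (hmeas : Measurable P)
    (hL2 : Integrable (fun ω => ‖P ω‖ ^ 2) ℙ)
    (s : ℝ) (hs : 0 < s) (W X γp γm : ℝ) (hγp : 0 ≤ γp) (hγm : 0 ≤ γm)
    (Sig : Matrix (Fin n) (Fin n) ℝ)
    (hSig : Sig = Matrix.of fun i j =>
      (∫ ω, P ω i * P ω j ∂ℙ) - (∫ ω, P ω i ∂ℙ) * (∫ ω, P ω j ∂ℙ))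
    (hpd : Sig.PosDef) :
    let γX : ℝ := if s⁻¹ * W ≤ X then γp * (X - s⁻¹ * W) else -γm * (X - s⁻¹ * W)
    let f : EuclideanSpace ℝ (Fin n) → ℝ := fun u =>
      ((∫ ω, (s * X + inner ℝ (P ω) u : ℝ) ^ 2 ∂ℙ) -
        (∫ ω, (s * X + inner ℝ (P ω) u : ℝ) ∂ℙ) ^ 2) -
      γX * (∫ ω, (s * X + inner ℝ (P ω) u : ℝ) ∂ℙ)
    let SinvEP : EuclideanSpace ℝ (Fin n) :=
      (EuclideanSpace.equiv (Fin n) ℝ).symm (Sig⁻¹.mulVec (fun i => ∫ ω, P ω i ∂ℙ))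
    let ustar : EuclideanSpace ℝ (Fin n) := (γX / 2) • SinvEP
    let Kp : EuclideanSpace ℝ (Fin n) := (γp / 2) • SinvEP
    let Km : EuclideanSpace ℝ (Fin n) := -((γm / 2) • SinvEP)
    (∀ u : EuclideanSpace ℝ (Fin n), f ustar ≤ f u) ∧
      (∀ u : EuclideanSpace ℝ (Fin n), (∀ v, f u ≤ f v) → u = ustar) ∧
      ustar = ((X - s⁻¹ * W) * (if s⁻¹ * W ≤ X then (1:ℝ) else 0)) • Kp +
        ((X - s⁻¹ * W) * (if X < s⁻¹ * W then (1:ℝ) else 0)) • Km := by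
  intro γX f SinvEP ustar Kp Km
  classical
  set μ : Fin n → ℝ := fun i => ∫ ω, P ω i ∂ℙ with hμdef
  set M : Fin n → Fin n → ℝ := fun i j => ∫ ω, P ω i * P ω j ∂ℙ with hMdef
  -- coordinate bound
  have hcoord : ∀ ω i, |P ω i| ≤ ‖P ω‖ := by
    intro ω i
    rw [EuclideanSpace.norm_eq, show |P ω i| = Real.sqrt ((P ω i)^2) by rw [Real.sqrt_sq_eq_abs]]
    apply Real.sqrt_le_sqrt
    simpa [sq_abs] using Finset.single_le_sum (f := fun j => P ω j ^ 2)
      (fun j _ => sq_nonneg _) (Finset.mem_univ i)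
  have hmi : ∀ i, Measurable fun ω => P ω i := fun i => by
    have := (EuclideanSpace.proj (𝕜 := ℝ) i).continuous.measurable.comp hmeas; exact this
  have hI1 : ∀ i, Integrable (fun ω => P ω i) ℙ := by
    intro i
    refine Integrable.mono' ((integrable_const (1:ℝ)).add hL2) (hmi i).aestronglyMeasurable ?_
    filter_upwards with ω
    have h1 := hcoord ω i
    have h2 : ‖P ω‖ ≤ 1 + ‖P ω‖^2 := by nlinarith [norm_nonneg (P ω)]
    calc ‖P ω i‖ = |P ω i| := rfl
      _ ≤ ‖P ω‖ := h1
      _ ≤ 1 + ‖P ω‖^2 := h2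
  have hI2 : ∀ i j, Integrable (fun ω => P ω i * P ω j) ℙ := by
    intro i j
    refine Integrable.mono' hL2 ((hmi i).mul (hmi j)).aestronglyMeasurable ?_
    filter_upwards with ω
    have h1 := hcoord ω i
    have h2 := hcoord ω j
    calc ‖P ω i * P ω j‖ = |P ω i| * |P ω j| := abs_mul _ _
      _ ≤ ‖P ω‖ * ‖P ω‖ := by
          exact mul_le_mul h1 h2 (abs_nonneg _) (norm_nonneg _)
      _ = ‖P ω‖^2 := (sq ‖P ω‖).symm
  have hinner : ∀ (u : EuclideanSpace ℝ (Fin n)) ω,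
      (inner ℝ (P ω) u : ℝ) = ∑ i, P ω i * u i := by
    intro u ω; simp [PiLp.inner_apply, RCLike.inner_apply, mul_comm]
  have hIsum : ∀ u : EuclideanSpace ℝ (Fin n),
      Integrable (fun ω => ∑ i, P ω i * u i) ℙ :=
    fun u => integrable_finset_sum _ fun i _ => (hI1 i).mul_const _
  have hIQ : ∀ u : EuclideanSpace ℝ (Fin n),
      Integrable (fun ω => ∑ i, ∑ j, (P ω i * P ω j) * (u i * u j)) ℙ :=
    fun u => integrable_finset_sum _ fun i _ =>
      integrable_finset_sum _ fun j _ => (hI2 i j).mul_const _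
  -- first moment
  have hE : ∀ u : EuclideanSpace ℝ (Fin n),
      (∫ ω, (s * X + inner ℝ (P ω) u : ℝ) ∂ℙ) = s * X + ∑ i, u i * μ i := by
    intro u
    have : (∫ ω, (s * X + inner ℝ (P ω) u : ℝ) ∂ℙ)
        = ∫ ω, (s * X + ∑ i, P ω i * u i) ∂ℙ := by
      simp_rw [hinner]
    rw [this, integral_add (integrable_const _) (hIsum u), integral_const,
      integral_finset_sum _ fun i _ => (hI1 i).mul_const _]
    simp only [probReal_univ, measure_univ, ENNReal.toReal_one, one_smul, smul_eq_mul, one_mul]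
    congr 1
    exact Finset.sum_congr rfl fun i _ => by rw [integral_mul_const, mul_comm]
  -- second moment
  have hE2 : ∀ u : EuclideanSpace ℝ (Fin n),
      (∫ ω, (s * X + inner ℝ (P ω) u : ℝ)^2 ∂ℙ)
        = (s*X)^2 + 2*(s*X)*(∑ i, u i * μ i) + ∑ i, ∑ j, (u i * u j) * M i j := by
    intro u
    have hpt : (fun ω => (s * X + inner ℝ (P ω) u : ℝ)^2)
        = fun ω => ((s*X)^2 + 2*(s*X)*(∑ i, P ω i * u i))
            + ∑ i, ∑ j, (P ω i * P ω j) * (u i * u j) := by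
      funext ω
      rw [hinner]
      have hSq : (∑ i, P ω i * u i)^2 = ∑ i, ∑ j, (P ω i * P ω j) * (u i * u j) := by
        rw [sq, Finset.sum_mul_sum]
        exact Finset.sum_congr rfl fun i _ => Finset.sum_congr rfl fun j _ => by ring
      rw [← hSq]; ring
    have hIa : Integrable (fun ω => (s*X)^2 + 2*(s*X)*(∑ i, P ω i * u i)) ℙ :=
      (integrable_const _).add ((hIsum u).const_mul _)
    rw [hpt, integral_add hIa (hIQ u),
      integral_add (integrable_const _) ((hIsum u).const_mul _), integral_const,
      integral_const_mul,
      integral_finset_sum _ (fun i _ => (hI1 i).mul_const _),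
      integral_finset_sum _ (fun i _ => integrable_finset_sum _ fun j _ => (hI2 i j).mul_const _)]
    simp only [probReal_univ, measure_univ, ENNReal.toReal_one, smul_eq_mul, one_mul]
    have h1 : ∀ i, (∫ ω, P ω i * u i ∂ℙ) = u i * μ i := fun i => by
      rw [integral_mul_const, mul_comm]
    have h2 : ∀ i, (∫ ω, ∑ j, P ω i * P ω j * (u i * u j) ∂ℙ) = ∑ j, u i * u j * M i j :=
      fun i => by
        rw [integral_finset_sum _ (fun j _ => (hI2 i j).mul_const _)]
        exact Finset.sum_congr rfl fun j _ => by rw [integral_mul_const, mul_comm]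
    simp_rw [h1, h2]
  -- f as a quadratic form
  have hf : ∀ u : EuclideanSpace ℝ (Fin n),
      f u = dotProduct (u : Fin n → ℝ) (Sig.mulVec u)
        - γX * dotProduct (u : Fin n → ℝ) μ - γX * (s * X) := by
    intro u
    have hQS : dotProduct (u : Fin n → ℝ) (Sig.mulVec u)
        = (∑ i, ∑ j, (u i * u j) * M i j) - (∑ i, u i * μ i)^2 := by
      have hsq : (∑ i, u i * μ i)^2 = ∑ i, ∑ j, (u i * u j) * (μ i * μ j) := by
        rw [sq, Finset.sum_mul_sum]
        exact Finset.sum_congr rfl fun i _ => Finset.sum_congr rfl fun j _ => by ring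
      rw [hsq]
      simp only [dotProduct, Matrix.mulVec, hSig, Matrix.of_apply, Finset.mul_sum,
        ← Finset.sum_sub_distrib]
      exact Finset.sum_congr rfl fun i _ => Finset.sum_congr rfl fun j _ => by ring
    have hfu : f u = (((s*X)^2 + 2*(s*X)*(∑ i, u i * μ i) + ∑ i, ∑ j, (u i * u j) * M i j)
        - (s * X + ∑ i, u i * μ i)^2) - γX * (s * X + ∑ i, u i * μ i) := by
      show ((∫ ω, (s * X + inner ℝ (P ω) u : ℝ) ^ 2 ∂ℙ) -
          (∫ ω, (s * X + inner ℝ (P ω) u : ℝ) ∂ℙ) ^ 2) -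
        γX * (∫ ω, (s * X + inner ℝ (P ω) u : ℝ) ∂ℙ) = _
      rw [hE2 u, hE u]
    rw [hfu, hQS]
    simp only [dotProduct]
    ring
  -- matrix facts
  have hdet : IsUnit Sig.det := isUnit_iff_ne_zero.mpr hpd.det_pos.ne'
  have hμSinv : Sig.mulVec (SinvEP : Fin n → ℝ) = μ := by
    show Sig.mulVec (Sig⁻¹.mulVec μ) = μ
    rw [Matrix.mulVec_mulVec, Matrix.mul_nonsing_inv Sig hdet, Matrix.one_mulVec]
  have hustar : Sig.mulVec (ustar : Fin n → ℝ) = (γX/2) • μ := by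
    show Sig.mulVec ((γX/2) • (SinvEP : Fin n → ℝ)) = (γX/2) • μ
    rw [Matrix.mulVec_smul, hμSinv]
  have hS : ∀ i j, Sig i j = Sig j i := by
    intro i j; rw [hSig]; simp only [Matrix.of_apply]
    have hc : (∫ ω, P ω i * P ω j ∂ℙ) = ∫ ω, P ω j * P ω i ∂ℙ := by
      apply integral_congr_ae
      filter_upwards with ω
      ring
    rw [hc]; ring
  have hsym : ∀ x y : Fin n → ℝ,
      dotProduct x (Sig.mulVec y) = dotProduct y (Sig.mulVec x) := by
    intro x y
    simp only [dotProduct, Matrix.mulVec, Finset.mul_sum]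
    rw [Finset.sum_comm]
    exact Finset.sum_congr rfl fun j _ => Finset.sum_congr rfl fun i _ => by
      rw [hS i j]; ring
  have hbu : ∀ v : Fin n → ℝ, γX * dotProduct v μ
      = 2 * dotProduct v (Sig.mulVec (ustar : Fin n → ℝ)) := by
    intro v
    rw [hustar, dotProduct_smul, smul_eq_mul]
    ring
  have hdiff : ∀ u : EuclideanSpace ℝ (Fin n),
      f u - f ustar = dotProduct ((u : Fin n → ℝ) - (ustar : Fin n → ℝ))
        (Sig.mulVec ((u : Fin n → ℝ) - (ustar : Fin n → ℝ))) := by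
    intro u
    rw [hf u, hf ustar, sub_dotProduct, Matrix.mulVec_sub,
      dotProduct_sub, dotProduct_sub]
    have h1 := hsym (ustar : Fin n → ℝ) (u : Fin n → ℝ)
    have h2 := hbu (u : Fin n → ℝ)
    have h3 := hbu (ustar : Fin n → ℝ)
    linarith
  have hpos : ∀ u : EuclideanSpace ℝ (Fin n), u ≠ ustar →
      0 < dotProduct ((u : Fin n → ℝ) - (ustar : Fin n → ℝ))
        (Sig.mulVec ((u : Fin n → ℝ) - (ustar : Fin n → ℝ))) := by
    intro u hu
    have hne : (u : Fin n → ℝ) - (ustar : Fin n → ℝ) ≠ 0 := by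
      intro h
      apply hu
      apply sub_eq_zero.mp
      exact WithLp.ofLp_injective 2 (by simpa using h)
    have := hpd.dotProduct_mulVec_pos hne
    simpa using this
  refine ⟨?_, ?_, ?_⟩
  · intro u
    by_cases h : u = ustar
    · rw [h]
    · have := hpos u h
      have hd := hdiff u
      linarith
  · intro u hmin
    by_contra h
    have h1 := hmin ustar
    have h2 := hpos u h
    have hd := hdiff u
    linarith
  · by_cases h : s⁻¹ * W ≤ X
    · rw [if_pos h, if_neg (not_lt.mpr h)]
      have hγX : γX = γp * (X - s⁻¹ * W) := by
        show (if s⁻¹ * W ≤ X then γp * (X - s⁻¹ * W) else -γm * (X - s⁻¹ * W)) = _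
        rw [if_pos h]
      show (γX/2) • SinvEP = ((X - s⁻¹*W) * 1) • ((γp/2) • SinvEP)
        + ((X - s⁻¹*W) * 0) • (-((γm/2) • SinvEP))
      rw [hγX, mul_zero, zero_smul, add_zero, smul_smul]
      congr 1; ring
    · rw [if_neg h, if_pos (lt_of_not_ge h)]
      have hγX : γX = -γm * (X - s⁻¹ * W) := by
        show (if s⁻¹ * W ≤ X then γp * (X - s⁻¹ * W) else -γm * (X - s⁻¹ * W)) = _
        rw [if_neg h]
      show (γX/2) • SinvEP = ((X - s⁻¹*W) * 0) • ((γp/2) • SinvEP)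
        + ((X - s⁻¹*W) * 1) • (-((γm/2) • SinvEP))
      rw [hγX, mul_zero, zero_smul, zero_add, smul_neg, ← neg_smul, smul_smul]
      congr 1; ring
end
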